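/- arXiv:2012.05644 — 6 statements merged into one kernel-verified Lean document; each statement's English description precedes it below -/
import Mathlib

section
/- For every graphon W : [0,1]² → [0,1] and every integer K ≥ 2, there exists a partition P = (P₁, …, P_K) of [0,1] into K measurable sets and a symmetric matrix (w_{kk'}) ∈ [0,1]^{K×K} such that the step function W_P(x,y) = Σ_{k,k'} w_{kk'} 1_{P_k × P_{k'}}(x,y) satisfies ‖W − W_P‖_□ ≤ (2/√(log K)) · ‖W‖_{L²}. -/
open MeasureTheory unitInterval

noncomputable section

/-- The cut norm of a kernel `U : [0,1]² → ℝ`: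
`sup` over measurable `S, T ⊆ [0,1]` of `|∫_{S×T} U|`. -/
def cutNorm (U : I → I → ℝ) : ℝ :=
  sSup { r : ℝ | ∃ S T : Set I, MeasurableSet S ∧ MeasurableSet T ∧
    r = |∫ p in S ×ˢ T, U p.1 p.2| }

/-- The L¹ norm of a kernel on `[0,1]²`. -/
def l1Norm (U : I → I → ℝ) : ℝ := ∫ p : I × I, |U p.1 p.2|

/-- The L² norm of a kernel on `[0,1]²`. -/
def l2Norm (U : I → I → ℝ) : ℝ := Real.sqrt (∫ p : I × I, (U p.1 p.2) ^ 2)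

/-- The cut distance: `inf` over Lebesgue-measure-preserving `φ : [0,1] → [0,1]`
of `‖W₁ - W₂^φ‖_□`. -/
def cutDist (W₁ W₂ : I → I → ℝ) : ℝ :=
  sInf { r : ℝ | ∃ φ : I → I, MeasurePreserving φ volume volume ∧
    r = cutNorm (fun x y => W₁ x y - W₂ (φ x) (φ y)) }

/-- The δ₁ distance: `inf` over Lebesgue-measure-preserving `φ : [0,1] → [0,1]`
of `‖W₁ - W₂^φ‖_{L¹}`. -/
def delta1 (W₁ W₂ : I → I → ℝ) : ℝ :=
  sInf { r : ℝ | ∃ φ : I → I, MeasurePreserving φ volume volume ∧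
    r = l1Norm (fun x y => W₁ x y - W₂ (φ x) (φ y)) }

/-- A graphon: a symmetric measurable function `[0,1]² → [0,1]`. -/
def IsGraphon (W : I → I → ℝ) : Prop :=
  Measurable (Function.uncurry W) ∧ (∀ x y, W x y = W y x) ∧
    ∀ x y, W x y ∈ Set.Icc (0 : ℝ) 1

open Classical in
/-- The step function associated to a partition `P` of `[0,1]` into `K` measurable
sets and a value matrix `w`. -/
def stepFun {K : ℕ} (P : Fin K → Set I) (w : Fin K → Fin K → ℝ) : I → I → ℝ :=
  fun x y => ∑ k, ∑ k', if x ∈ P k ∧ y ∈ P k' then w k k' else 0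

/-- The `n`-th cell of the equitable partition of `[0,1]` into `N` intervals:
`[n/N, (n+1)/N)`, with the last cell closed at `1`. -/
def eqCell (N : ℕ) (n : Fin N) : Set I :=
  {x : I | ((n : ℕ) : ℝ) / N ≤ (x : ℝ) ∧
    ((x : ℝ) < (((n : ℕ) : ℝ) + 1) / N ∨ (n : ℕ) + 1 = N)}

/-- The step function of a graph with adjacency matrix `A ∈ {0,1}^{N×N}`,
built on the equitable partition of `[0,1]` into `N` intervals. -/
def graphStepFun (N : ℕ) (A : Fin N → Fin N → ℝ) : I → I → ℝ :=
  stepFun (eqCell N) A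

namespace WeakReg

open Classical in
def stepF {ι : Type} [Fintype ι] (P : ι → Set I) (w : ι → ι → ℝ) : I → I → ℝ :=
  fun x y => ∑ k, ∑ k', if x ∈ P k ∧ y ∈ P k' then w k k' else 0

lemma stepFun_eq_stepF {K : ℕ} (P : Fin K → Set I) (w : Fin K → Fin K → ℝ) :
    stepFun P w = stepF P w := rfl

structure Partn (ι : Type) [Fintype ι] where
  P : ι → Set I
  meas : ∀ k, MeasurableSet (P k)
  disj : Pairwise (Function.onFun Disjoint P)
  cover : ⋃ k, P k = Set.univ

variable {ι : Type} [Fintype ι]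

lemma Partn.exists_mem (Pp : Partn ι) (x : I) : ∃ k, x ∈ Pp.P k := by
  have : x ∈ ⋃ k, Pp.P k := Pp.cover ▸ Set.mem_univ x
  simpa using this

lemma Partn.eq_of_mem (Pp : Partn ι) {x : I} {k l : ι} (hk : x ∈ Pp.P k) (hl : x ∈ Pp.P l) :
    k = l := by
  by_contra h
  exact (Pp.disj h).le_bot ⟨hk, hl⟩ 

lemma stepF_apply (Pp : Partn ι) (w : ι → ι → ℝ) {x y : I} {k k' : ι}
    (hk : x ∈ Pp.P k) (hk' : y ∈ Pp.P k') : stepF Pp.P w x y = w k k' := by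
  classical
  unfold stepF
  rw [Finset.sum_eq_single k]
  · rw [Finset.sum_eq_single k']
    · rw [if_pos ⟨hk, hk'⟩]
    · intro j _ hj
      rw [if_neg]
      rintro ⟨-, hy⟩
      exact hj (Pp.eq_of_mem hy hk')
    · simp
  · intro j _ hj
    apply Finset.sum_eq_zero
    intro j' _
    rw [if_neg]
    rintro ⟨hx, -⟩
    exact hj (Pp.eq_of_mem hx hk)
  · simp

lemma measurable_stepF (Pp : Partn ι) (w : ι → ι → ℝ) :
    Measurable (fun p : I × I => stepF Pp.P w p.1 p.2) := by
  classical
  unfold stepF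
  apply Finset.measurable_sum
  intro k _
  apply Finset.measurable_sum
  intro k' _
  have hs : MeasurableSet {p : I × I | p.1 ∈ Pp.P k ∧ p.2 ∈ Pp.P k'} :=
    ((Pp.meas k).prod (Pp.meas k'))
  exact Measurable.ite hs measurable_const measurable_const

lemma abs_stepF_le (Pp : Partn ι) (w : ι → ι → ℝ) (C : ℝ) (hC : ∀ k k', |w k k'| ≤ C)
    (hC0 : 0 ≤ C) (x y : I) : |stepF Pp.P w x y| ≤ C := by
  classical
  obtain ⟨k, hk⟩ := Pp.exists_mem x
  obtain ⟨k', hk'⟩ := Pp.exists_mem y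
  rw [stepF_apply Pp w hk hk']
  exact hC k k'

lemma integrable_stepF (Pp : Partn ι) (w : ι → ι → ℝ) :
    Integrable (fun p : I × I => stepF Pp.P w p.1 p.2) := by
  classical
  obtain ⟨C, hC, hC0⟩ : ∃ C, (∀ k k', |w k k'| ≤ C) ∧ 0 ≤ C := by
    rcases isEmpty_or_nonempty ι with h | h
    · exact ⟨0, fun k => (IsEmpty.false k).elim, le_refl 0⟩
    · obtain ⟨C, hC⟩ := Finite.exists_le (fun q : ι × ι => |w q.1 q.2|)
      exact ⟨max C 0, fun k k' => le_trans (hC (k, k')) (le_max_left _ _), le_max_right _ _⟩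
  refine ⟨(measurable_stepF Pp w).aestronglyMeasurable,
    HasFiniteIntegral.of_bounded (C := C) (Filter.Eventually.of_forall fun p => ?_)⟩
  simpa using abs_stepF_le Pp w C hC hC0 p.1 p.2

/-- Average value of W on a cell. -/
def avg (W : I → I → ℝ) (A B : Set I) : ℝ :=
  if (volume A).toReal * (volume B).toReal = 0 then 0
  else (∫ p in A ×ˢ B, W p.1 p.2) / ((volume A).toReal * (volume B).toReal)

lemma volume_prod_cell (A B : Set I) :
    volume (A ×ˢ B) = volume A * volume B := by
  rw [Measure.volume_eq_prod, Measure.prod_prod]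

lemma integrable_of_bdd {f : I × I → ℝ} (hf : Measurable f) (C : ℝ) (hC : ∀ p, |f p| ≤ C) :
    Integrable f :=
  ⟨hf.aestronglyMeasurable, HasFiniteIntegral.of_bounded (C := C)
    (Filter.Eventually.of_forall (fun p => by simpa using hC p))⟩

variable {W : I → I → ℝ}

lemma graphon_meas (hW : IsGraphon W) : Measurable (fun p : I × I => W p.1 p.2) := hW.1

lemma graphon_int (hW : IsGraphon W) : Integrable (fun p : I × I => W p.1 p.2) :=
  integrable_of_bdd hW.1 1 (fun p => abs_le.mpr ⟨by linarith [(hW.2.2 p.1 p.2).1], (hW.2.2 p.1 p.2).2⟩)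

/-- The key identity for the average: integral over a cell equals avg times cell measure. -/
lemma setIntegral_eq_avg (hW : IsGraphon W) (A B : Set I) :
    ∫ p in A ×ˢ B, W p.1 p.2 = avg W A B * ((volume A).toReal * (volume B).toReal) := by
  unfold avg
  by_cases h : (volume A).toReal * (volume B).toReal = 0
  · rw [if_pos h, zero_mul]
    have : volume (A ×ˢ B) = 0 := by
      rw [volume_prod_cell]
      rcases mul_eq_zero.mp h with h' | h'
      · rw [ENNReal.toReal_eq_zero_iff] at h'
        rcases h' with h' | h'
        · rw [h', zero_mul]
        · exact absurd h' (measure_ne_top _ _)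
      · rw [ENNReal.toReal_eq_zero_iff] at h'
        rcases h' with h' | h'
        · rw [h', mul_zero]
        · exact absurd h' (measure_ne_top _ _)
    rw [Measure.restrict_eq_zero.mpr this]
    simp
  · rw [if_neg h, div_mul_cancel₀ _ h]

lemma avg_nonneg (hW : IsGraphon W) (A B : Set I) (hA : MeasurableSet A) (hB : MeasurableSet B) :
    0 ≤ avg W A B := by
  unfold avg
  by_cases h : (volume A).toReal * (volume B).toReal = 0
  · rw [if_pos h]
  · rw [if_neg h]
    apply div_nonneg
    · exact setIntegral_nonneg (hA.prod hB) (fun p _ => (hW.2.2 p.1 p.2).1)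
    · positivity

lemma avg_le_one (hW : IsGraphon W) (A B : Set I) (hA : MeasurableSet A) (hB : MeasurableSet B) :
    avg W A B ≤ 1 := by
  unfold avg
  by_cases h : (volume A).toReal * (volume B).toReal = 0
  · rw [if_pos h]; norm_num
  · rw [if_neg h]
    rw [div_le_one (lt_of_le_of_ne (by positivity) (Ne.symm h))]
    calc ∫ p in A ×ˢ B, W p.1 p.2 ≤ ∫ _p in A ×ˢ B, (1 : ℝ) := by
          apply setIntegral_mono_on (graphon_int hW).integrableOn (integrable_const 1)
            (hA.prod hB)
          exact fun p _ => (hW.2.2 p.1 p.2).2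
      _ = (volume A).toReal * (volume B).toReal := by
          rw [setIntegral_const, smul_eq_mul, mul_one, measureReal_def, volume_prod_cell,
            ENNReal.toReal_mul]


lemma setIntegral_swap (hW : IsGraphon W) (A B : Set I) :
    ∫ p in A ×ˢ B, W p.1 p.2 = ∫ p in B ×ˢ A, W p.1 p.2 := by
  have h1 : (volume : Measure (I × I)).restrict (A ×ˢ B)
      = ((volume : Measure I).restrict A).prod ((volume : Measure I).restrict B) := by
    rw [Measure.volume_eq_prod]; exact (Measure.prod_restrict A B).symm
  have h2 : (volume : Measure (I × I)).restrict (B ×ˢ A)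
      = ((volume : Measure I).restrict B).prod ((volume : Measure I).restrict A) := by
    rw [Measure.volume_eq_prod]; exact (Measure.prod_restrict B A).symm
  rw [h1, h2, ← integral_prod_swap (μ := (volume : Measure I).restrict A)
    (ν := (volume : Measure I).restrict B) (fun z : I × I => W z.1 z.2)]
  exact integral_congr_ae (Filter.Eventually.of_forall fun z => (hW.2.1 z.1 z.2).symm)

lemma avg_symm (hW : IsGraphon W) (A B : Set I) : avg W A B = avg W B A := by
  unfold avg
  rw [setIntegral_swap hW A B, mul_comm (volume A).toReal]

variable {ι : Type} [Fintype ι]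

/-- The averaged step function of a partition. -/
def stepAvg (W : I → I → ℝ) (Pp : Partn ι) : I → I → ℝ :=
  stepF Pp.P (fun k k' => avg W (Pp.P k) (Pp.P k'))

lemma stepAvg_mem (hW : IsGraphon W) (Pp : Partn ι) (x y : I) :
    stepAvg W Pp x y ∈ Set.Icc (0:ℝ) 1 := by
  obtain ⟨k, hk⟩ := Pp.exists_mem x
  obtain ⟨k', hk'⟩ := Pp.exists_mem y
  rw [stepAvg, stepF_apply Pp _ hk hk']
  exact ⟨avg_nonneg hW _ _ (Pp.meas k) (Pp.meas k'),
    avg_le_one hW _ _ (Pp.meas k) (Pp.meas k')⟩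

lemma integrable_stepAvg (Pp : Partn ι) : Integrable (fun p : I × I => stepAvg W Pp p.1 p.2) :=
  integrable_stepF Pp _

lemma measurable_stepAvg (Pp : Partn ι) : Measurable (fun p : I × I => stepAvg W Pp p.1 p.2) :=
  measurable_stepF Pp _

/-- Integral of a function against stepF, expanded over cells. -/
lemma integral_mul_stepF (Pp : Partn ι) (c : ι → ι → ℝ) {g : I × I → ℝ}
    (hg : Measurable g) (hgi : Integrable g) :
    ∫ p, g p * stepF Pp.P c p.1 p.2 =
      ∑ k, ∑ k', c k k' * ∫ p in Pp.P k ×ˢ Pp.P k', g p := by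
  classical
  have key : (fun p : I × I => g p * stepF Pp.P c p.1 p.2) =
      fun p => ∑ k, ∑ k', (Pp.P k ×ˢ Pp.P k').indicator (fun q => c k k' * g q) p := by
    funext p
    rw [stepF, Finset.mul_sum]
    congr 1; funext k
    rw [Finset.mul_sum]
    congr 1; funext k'
    simp only [Set.indicator_apply, Set.mem_prod]
    by_cases h : p.1 ∈ Pp.P k ∧ p.2 ∈ Pp.P k'
    · rw [if_pos h, if_pos h, mul_comm]
    · rw [if_neg h, if_neg h, mul_zero]
  rw [key, integral_finset_sum]
  · congr 1; funext k
    rw [integral_finset_sum]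
    · congr 1; funext k'
      rw [integral_indicator ((Pp.meas k).prod (Pp.meas k')), integral_const_mul]
    · intro k' _
      exact ((hgi.const_mul _).indicator ((Pp.meas k).prod (Pp.meas k')))
  · intro k _
    apply integrable_finset_sum
    intro k' _
    exact ((hgi.const_mul _).indicator ((Pp.meas k).prod (Pp.meas k')))

/-- Orthogonality: W − stepAvg integrates to zero against any step function on the partition. -/
lemma orth (hW : IsGraphon W) (Pp : Partn ι) (c : ι → ι → ℝ) :
    ∫ p : I × I, (W p.1 p.2 - stepAvg W Pp p.1 p.2) * stepF Pp.P c p.1 p.2 = 0 := by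
  have hmeas : Measurable (fun p : I × I => W p.1 p.2 - stepAvg W Pp p.1 p.2) :=
    (graphon_meas hW).sub (measurable_stepAvg Pp)
  have hint : Integrable (fun p : I × I => W p.1 p.2 - stepAvg W Pp p.1 p.2) :=
    (graphon_int hW).sub (integrable_stepAvg Pp)
  rw [integral_mul_stepF Pp c hmeas hint]
  apply Finset.sum_eq_zero; intro k _
  apply Finset.sum_eq_zero; intro k' _
  have hcell : ∫ p in Pp.P k ×ˢ Pp.P k', (W p.1 p.2 - stepAvg W Pp p.1 p.2) = 0 := by
    rw [integral_sub ((graphon_int hW).integrableOn) ((integrable_stepAvg Pp).integrableOn)]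
    have h1 : ∫ p in Pp.P k ×ˢ Pp.P k', stepAvg W Pp p.1 p.2
        = avg W (Pp.P k) (Pp.P k') * ((volume (Pp.P k)).toReal * (volume (Pp.P k')).toReal) := by
      rw [setIntegral_congr_fun ((Pp.meas k).prod (Pp.meas k'))
        (g := fun _ => avg W (Pp.P k) (Pp.P k'))]
      · rw [setIntegral_const, smul_eq_mul, measureReal_def, volume_prod_cell, ENNReal.toReal_mul, mul_comm]
      · intro p hp
        exact stepF_apply Pp _ hp.1 hp.2
    rw [h1, setIntegral_eq_avg hW, sub_self]
  rw [hcell, mul_zero]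


/-- Energy of a partition. -/
def energy (W : I → I → ℝ) (Pp : Partn ι) : ℝ := ∫ p : I × I, (stepAvg W Pp p.1 p.2) ^ 2

def IsStepOn (Pp : Partn ι) (f : I → I → ℝ) : Prop :=
  ∃ c, ∀ x y, f x y = stepF Pp.P c x y

lemma stepAvg_isStepOn (Pp : Partn ι) : IsStepOn Pp (stepAvg W Pp) :=
  ⟨_, fun _ _ => rfl⟩

lemma IsStepOn.sub {Pp : Partn ι} {f g : I → I → ℝ} (hf : IsStepOn Pp f) (hg : IsStepOn Pp g) :
    IsStepOn Pp (fun x y => f x y - g x y) := by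
  classical
  obtain ⟨c, hc⟩ := hf
  obtain ⟨d, hd⟩ := hg
  refine ⟨fun k k' => c k k' - d k k', fun x y => ?_⟩
  show f x y - g x y = _
  rw [hc, hd]
  unfold stepF
  rw [← Finset.sum_sub_distrib]
  congr 1; funext k
  rw [← Finset.sum_sub_distrib]
  congr 1; funext k'
  by_cases h : x ∈ Pp.P k ∧ y ∈ Pp.P k'
  · simp [h]
  · simp [h]

lemma orth' (hW : IsGraphon W) (Pp : Partn ι) {f : I → I → ℝ} (hf : IsStepOn Pp f) :
    ∫ p : I × I, (W p.1 p.2 - stepAvg W Pp p.1 p.2) * f p.1 p.2 = 0 := by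
  obtain ⟨c, hc⟩ := hf
  rw [show (fun p : I × I => (W p.1 p.2 - stepAvg W Pp p.1 p.2) * f p.1 p.2)
    = fun p : I × I => (W p.1 p.2 - stepAvg W Pp p.1 p.2) * stepF Pp.P c p.1 p.2 by
      funext p; rw [hc]]
  exact orth hW Pp c

lemma energy_identity (hW : IsGraphon W) (Pp : Partn ι) :
    ∫ p : I × I, (W p.1 p.2 - stepAvg W Pp p.1 p.2) ^ 2
      = (∫ p : I × I, (W p.1 p.2) ^ 2) - energy W Pp := by
  have hWm := graphon_meas hW
  have hAm := measurable_stepAvg (W := W) Pp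
  have hWb : ∀ p : I × I, |W p.1 p.2| ≤ 1 := fun p =>
    abs_le.mpr ⟨by linarith [(hW.2.2 p.1 p.2).1], (hW.2.2 p.1 p.2).2⟩
  have hAb : ∀ p : I × I, |stepAvg W Pp p.1 p.2| ≤ 1 := fun p =>
    abs_le.mpr ⟨by linarith [(stepAvg_mem hW Pp p.1 p.2).1], (stepAvg_mem hW Pp p.1 p.2).2⟩
  have h1 : (fun p : I × I => (W p.1 p.2 - stepAvg W Pp p.1 p.2) ^ 2)
      = fun p : I × I => (W p.1 p.2) ^ 2 - (stepAvg W Pp p.1 p.2) ^ 2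
        - 2 * ((W p.1 p.2 - stepAvg W Pp p.1 p.2) * stepAvg W Pp p.1 p.2) := by
    funext p; ring
  have i1 : Integrable (fun p : I × I => (W p.1 p.2) ^ 2) :=
    integrable_of_bdd (hWm.pow_const 2) 1 (fun p => by
      rw [abs_pow]; exact pow_le_one₀ (abs_nonneg _) (hWb p))
  have i2 : Integrable (fun p : I × I => (stepAvg W Pp p.1 p.2) ^ 2) :=
    integrable_of_bdd (hAm.pow_const 2) 1 (fun p => by
      rw [abs_pow]; exact pow_le_one₀ (abs_nonneg _) (hAb p))
  have i3 : Integrable (fun p : I × I =>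
      2 * ((W p.1 p.2 - stepAvg W Pp p.1 p.2) * stepAvg W Pp p.1 p.2)) := by
    apply integrable_of_bdd (((hWm.sub hAm).mul hAm).const_mul 2) 4
    intro p
    simp only [Pi.mul_apply, Pi.sub_apply]; rw [abs_mul, abs_mul, abs_two]
    have h4 : |W p.1 p.2 - stepAvg W Pp p.1 p.2| ≤ 2 :=
      (abs_sub _ _).trans (by linarith [hWb p, hAb p])
    nlinarith [abs_nonneg (W p.1 p.2 - stepAvg W Pp p.1 p.2), abs_nonneg (stepAvg W Pp p.1 p.2),
      hAb p]
  have j1 : Integrable (fun p : I × I => (W p.1 p.2) ^ 2 - (stepAvg W Pp p.1 p.2) ^ 2) :=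
    i1.sub i2
  rw [h1, integral_sub j1 i3, integral_sub i1 i2, integral_const_mul,
    orth' hW Pp (stepAvg_isStepOn Pp), mul_zero, sub_zero]
  rfl

/-- Cauchy–Schwarz with the indicator of a set, on a probability space. -/
lemma sq_setIntegral_le {g : I × I → ℝ} (hg : Measurable g) (C : ℝ) (hC : ∀ p, |g p| ≤ C)
    (s : Set (I × I)) :
    (∫ p in s, g p) ^ 2 ≤ ∫ p : I × I, (g p) ^ 2 := by
  have hC0 : 0 ≤ C := le_trans (abs_nonneg _) (hC (0, 0))
  have hgi : Integrable g := integrable_of_bdd hg C hC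
  have hai : Integrable (fun p => |g p|) := hgi.abs
  have hsqi : Integrable (fun p => (g p) ^ 2) :=
    integrable_of_bdd (hg.pow_const 2) (C ^ 2) (fun p => by
      rw [abs_pow]; exact pow_le_pow_left₀ (abs_nonneg _) (hC p) 2)
  set c : ℝ := ∫ p : I × I, |g p| with hc
  have hc0 : 0 ≤ c := integral_nonneg (fun p => abs_nonneg _)
  have step1 : |∫ p in s, g p| ≤ c := by
    calc |∫ p in s, g p| ≤ ∫ p in s, |g p| := norm_integral_le_integral_norm g
      _ ≤ c := setIntegral_le_integral hai (Filter.Eventually.of_forall fun p => abs_nonneg _)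
  have step2 : c ^ 2 ≤ ∫ p : I × I, (g p) ^ 2 := by
    have expand : (0:ℝ) ≤ ∫ p : I × I, (|g p| - c) ^ 2 :=
      integral_nonneg (fun p => sq_nonneg _)
    have : ∫ p : I × I, (|g p| - c) ^ 2 = (∫ p : I × I, (g p) ^ 2) - c ^ 2 := by
      have h1 : (fun p : I × I => (|g p| - c) ^ 2)
          = fun p : I × I => (g p) ^ 2 - (2 * c) * |g p| + c ^ 2 := by
        funext p; linear_combination sq_abs (g p)
      have j2 : Integrable (fun p : I × I => (g p) ^ 2 - (2 * c) * |g p|) :=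
        hsqi.sub (hai.const_mul _)
      rw [h1, integral_add j2 (integrable_const _),
        integral_sub hsqi (hai.const_mul _), integral_const_mul, integral_const]
      simp only [measureReal_def, measure_univ, ENNReal.toReal_one, smul_eq_mul, one_mul]
      rw [← hc]; ring
    linarith
  calc (∫ p in s, g p) ^ 2 = |∫ p in s, g p| ^ 2 := (sq_abs _).symm
    _ ≤ c ^ 2 := pow_le_pow_left₀ (abs_nonneg _) step1 2
    _ ≤ _ := step2


open Classical in
/-- Refine a partition by the sets `S` and `T`. -/
def Partn.refine (Pp : Partn ι) (S T : Set I) (hS : MeasurableSet S) (hT : MeasurableSet T) :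
    Partn (ι × Bool × Bool) where
  P := fun k => Pp.P k.1 ∩ (if k.2.1 then S else Sᶜ) ∩ (if k.2.2 then T else Tᶜ)
  meas := fun k => by
    apply ((Pp.meas k.1).inter _).inter
    · by_cases h : k.2.2 = true <;> simp [h, hT, hT.compl]
    · by_cases h : k.2.1 = true <;> simp [h, hS, hS.compl]
  disj := by
    intro k l hkl
    rw [Function.onFun, Set.disjoint_left]
    intro x hxk hxl
    apply hkl
    obtain ⟨⟨hk1, hk2⟩, hk3⟩ := hxk
    obtain ⟨⟨hl1, hl2⟩, hl3⟩ := hxl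
    have e1 : k.1 = l.1 := Pp.eq_of_mem hk1 hl1
    have e2 : k.2.1 = l.2.1 := by
      rcases Bool.eq_false_or_eq_true k.2.1 with h1 | h1 <;>
        rcases Bool.eq_false_or_eq_true l.2.1 with h2 | h2
      · rw [h1, h2]
      · simp [h1, h2] at hk2 hl2; first | exact absurd hl2 hk2 | first | exact absurd hl2 hk2 | first | exact absurd hl2 hk2 | exact absurd hk2 hl2
      · simp [h1, h2] at hk2 hl2; first | exact absurd hl2 hk2 | exact absurd hk2 hl2
      · rw [h1, h2]
    have e3 : k.2.2 = l.2.2 := by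
      rcases Bool.eq_false_or_eq_true k.2.2 with h1 | h1 <;>
        rcases Bool.eq_false_or_eq_true l.2.2 with h2 | h2
      · rw [h1, h2]
      · simp [h1, h2] at hk3 hl3; first | exact absurd hl3 hk3 | first | exact absurd hl3 hk3 | first | exact absurd hl3 hk3 | exact absurd hk3 hl3
      · simp [h1, h2] at hk3 hl3; first | exact absurd hl3 hk3 | exact absurd hk3 hl3
      · rw [h1, h2]
    exact Prod.ext e1 (Prod.ext e2 e3)
  cover := by
    rw [Set.eq_univ_iff_forall]
    intro x
    obtain ⟨k, hk⟩ := Pp.exists_mem x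
    refine Set.mem_iUnion.mpr ⟨(k, decide (x ∈ S), decide (x ∈ T)), ⟨⟨hk, ?_⟩, ?_⟩⟩
    · by_cases h : x ∈ S <;> simp [h]
    · by_cases h : x ∈ T <;> simp [h]

lemma refine_subset (Pp : Partn ι) (S T : Set I) (hS : MeasurableSet S) (hT : MeasurableSet T)
    (k : ι × Bool × Bool) : (Pp.refine S T hS hT).P k ⊆ Pp.P k.1 :=
  fun _ h => h.1.1

lemma refine_dichotomy_S (Pp : Partn ι) (S T : Set I) (hS : MeasurableSet S)
    (hT : MeasurableSet T) (k : ι × Bool × Bool) :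
    (Pp.refine S T hS hT).P k ⊆ S ∨ (Pp.refine S T hS hT).P k ⊆ Sᶜ := by
  by_cases h : k.2.1 = true
  · left; intro x hx; have := hx.1.2; rwa [if_pos h] at this
  · right; intro x hx; have := hx.1.2; rwa [if_neg h] at this

lemma refine_dichotomy_T (Pp : Partn ι) (S T : Set I) (hS : MeasurableSet S)
    (hT : MeasurableSet T) (k : ι × Bool × Bool) :
    (Pp.refine S T hS hT).P k ⊆ T ∨ (Pp.refine S T hS hT).P k ⊆ Tᶜ := by
  by_cases h : k.2.2 = true
  · left; intro x hx; have := hx.2; rwa [if_pos h] at this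
  · right; intro x hx; have := hx.2; rwa [if_neg h] at this

lemma stepAvg_isStepOn_refine (Pp : Partn ι) (S T : Set I) (hS : MeasurableSet S)
    (hT : MeasurableSet T) : IsStepOn (Pp.refine S T hS hT) (stepAvg W Pp) := by
  classical
  set Q := Pp.refine S T hS hT
  refine ⟨fun k k' => avg W (Pp.P k.1) (Pp.P k'.1), fun x y => ?_⟩
  obtain ⟨k, hk⟩ := Q.exists_mem x
  obtain ⟨k', hk'⟩ := Q.exists_mem y
  rw [stepF_apply Q _ hk hk', stepAvg,
    stepF_apply Pp _ (refine_subset Pp S T hS hT k hk) (refine_subset Pp S T hS hT k' hk')]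

lemma refine_setIntegral_zero (hW : IsGraphon W) (Pp : Partn ι) (S T : Set I)
    (hS : MeasurableSet S) (hT : MeasurableSet T) :
    ∫ p in S ×ˢ T, (W p.1 p.2 - stepAvg W (Pp.refine S T hS hT) p.1 p.2) = 0 := by
  classical
  set Q := Pp.refine S T hS hT with hQ
  set u : I × I → ℝ := fun p => W p.1 p.2 - stepAvg W Q p.1 p.2 with hu
  set cInd : (ι × Bool × Bool) → (ι × Bool × Bool) → ℝ :=
    fun k k' => if Q.P k ⊆ S ∧ Q.P k' ⊆ T then 1 else 0 with hcInd
  have hind : ∀ p : I × I, (S ×ˢ T).indicator (fun _ => (1:ℝ)) p = stepF Q.P cInd p.1 p.2 := by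
    intro p
    obtain ⟨k, hk⟩ := Q.exists_mem p.1
    obtain ⟨k', hk'⟩ := Q.exists_mem p.2
    rw [stepF_apply Q _ hk hk', Set.indicator_apply]
    show (if p ∈ S ×ˢ T then (1:ℝ) else 0) = if Q.P k ⊆ S ∧ Q.P k' ⊆ T then 1 else 0
    by_cases h : p ∈ S ×ˢ T
    · rw [if_pos h, if_pos]
      constructor
      · rcases refine_dichotomy_S Pp S T hS hT k with h' | h'
        · rwa [← hQ] at h'
        · rw [← hQ] at h'; exact absurd (h' hk) (by simp [h.1])
      · rcases refine_dichotomy_T Pp S T hS hT k' with h' | h'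
        · rwa [← hQ] at h'
        · rw [← hQ] at h'; exact absurd (h' hk') (by simp [h.2])
    · rw [if_neg h, if_neg]
      rintro ⟨h1, h2⟩
      exact h ⟨h1 hk, h2 hk'⟩
  have key : ∫ p in S ×ˢ T, u p = ∫ p : I × I, u p * stepF Q.P cInd p.1 p.2 := by
    rw [← integral_indicator (hS.prod hT)]
    congr 1
    funext p
    rw [← hind p, Set.indicator_apply, Set.indicator_apply]
    by_cases h : p ∈ S ×ˢ T
    · rw [if_pos h, if_pos h, mul_one]
    · rw [if_neg h, if_neg h, mul_zero]
  rw [key]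
  exact orth hW Q cInd

lemma energy_le_sq (hW : IsGraphon W) (Pp : Partn ι) :
    energy W Pp ≤ ∫ p : I × I, (W p.1 p.2) ^ 2 := by
  have h := energy_identity hW Pp
  have h2 : (0:ℝ) ≤ ∫ p : I × I, (W p.1 p.2 - stepAvg W Pp p.1 p.2) ^ 2 :=
    integral_nonneg (fun p => sq_nonneg _)
  linarith

lemma energy_nonneg (Pp : Partn ι) : 0 ≤ energy W Pp :=
  integral_nonneg (fun p => sq_nonneg _)

lemma energy_refine_ge (hW : IsGraphon W) (Pp : Partn ι) (S T : Set I)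
    (hS : MeasurableSet S) (hT : MeasurableSet T) :
    energy W Pp + (∫ p in S ×ˢ T, (W p.1 p.2 - stepAvg W Pp p.1 p.2)) ^ 2 ≤
      energy W (Pp.refine S T hS hT) := by
  classical
  set Q := Pp.refine S T hS hT with hQ
  have hA : IsStepOn Q (stepAvg W Pp) := stepAvg_isStepOn_refine Pp S T hS hT
  have hBA : IsStepOn Q (fun x y => stepAvg W Q x y - stepAvg W Pp x y) :=
    (stepAvg_isStepOn Q).sub hA
  have hAm := measurable_stepAvg (W := W) Pp
  have hBm := measurable_stepAvg (W := W) Q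
  have hAb : ∀ p : I × I, |stepAvg W Pp p.1 p.2| ≤ 1 := fun p =>
    abs_le.mpr ⟨by linarith [(stepAvg_mem hW Pp p.1 p.2).1], (stepAvg_mem hW Pp p.1 p.2).2⟩
  have hBb : ∀ p : I × I, |stepAvg W Q p.1 p.2| ≤ 1 := fun p =>
    abs_le.mpr ⟨by linarith [(stepAvg_mem hW Q p.1 p.2).1], (stepAvg_mem hW Q p.1 p.2).2⟩
  -- the set integral of W - A equals that of B - A
  have hint1 : Integrable (fun p : I × I => W p.1 p.2 - stepAvg W Q p.1 p.2) :=
    (graphon_int hW).sub (integrable_stepAvg Q)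
  have hint2 : Integrable (fun p : I × I => stepAvg W Q p.1 p.2 - stepAvg W Pp p.1 p.2) :=
    (integrable_stepAvg Q).sub (integrable_stepAvg Pp)
  have hsplit : ∫ p in S ×ˢ T, (W p.1 p.2 - stepAvg W Pp p.1 p.2)
      = ∫ p in S ×ˢ T, (stepAvg W Q p.1 p.2 - stepAvg W Pp p.1 p.2) := by
    have : (fun p : I × I => W p.1 p.2 - stepAvg W Pp p.1 p.2)
        = fun p : I × I => (W p.1 p.2 - stepAvg W Q p.1 p.2)
            + (stepAvg W Q p.1 p.2 - stepAvg W Pp p.1 p.2) := by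
      funext p; ring
    rw [this, integral_add hint1.integrableOn hint2.integrableOn,
      refine_setIntegral_zero hW Pp S T hS hT, zero_add]
  -- Cauchy-Schwarz
  have hcs : (∫ p in S ×ˢ T, (stepAvg W Q p.1 p.2 - stepAvg W Pp p.1 p.2)) ^ 2
      ≤ ∫ p : I × I, (stepAvg W Q p.1 p.2 - stepAvg W Pp p.1 p.2) ^ 2 := by
    apply sq_setIntegral_le (hBm.sub hAm) 2
    intro p
    exact (abs_sub _ _).trans (by linarith [hAb p, hBb p])
  -- Pythagoras
  have hpyth : ∫ p : I × I, (stepAvg W Q p.1 p.2 - stepAvg W Pp p.1 p.2) ^ 2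
      = energy W Q - energy W Pp := by
    have exp1 : (fun p : I × I => (W p.1 p.2 - stepAvg W Pp p.1 p.2) ^ 2)
        = fun p : I × I => (W p.1 p.2 - stepAvg W Q p.1 p.2) ^ 2
          + (stepAvg W Q p.1 p.2 - stepAvg W Pp p.1 p.2) ^ 2
          + 2 * ((W p.1 p.2 - stepAvg W Q p.1 p.2)
              * (stepAvg W Q p.1 p.2 - stepAvg W Pp p.1 p.2)) := by
      funext p; ring
    have i1 : Integrable (fun p : I × I => (W p.1 p.2 - stepAvg W Q p.1 p.2) ^ 2) :=
      integrable_of_bdd ((((graphon_meas hW).sub hBm)).pow_const 2) 4 (fun p => by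
        have := (abs_sub (W p.1 p.2) (stepAvg W Q p.1 p.2)).trans
          ((by linarith [hBb p, (abs_le.mpr ⟨by linarith [(hW.2.2 p.1 p.2).1],
            (hW.2.2 p.1 p.2).2⟩ : |W p.1 p.2| ≤ 1)]) :
            |W p.1 p.2| + |stepAvg W Q p.1 p.2| ≤ 2)
        rw [abs_pow]
        calc |W p.1 p.2 - stepAvg W Q p.1 p.2| ^ 2 ≤ 2 ^ 2 :=
              pow_le_pow_left₀ (abs_nonneg _) this 2
          _ = 4 := by norm_num)
    have i2 : Integrable (fun p : I × I =>
        (stepAvg W Q p.1 p.2 - stepAvg W Pp p.1 p.2) ^ 2) :=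
      integrable_of_bdd ((hBm.sub hAm).pow_const 2) 4 (fun p => by
        have := (abs_sub (stepAvg W Q p.1 p.2) (stepAvg W Pp p.1 p.2)).trans
          (by linarith [hBb p, hAb p] : |stepAvg W Q p.1 p.2| + |stepAvg W Pp p.1 p.2| ≤ 2)
        rw [abs_pow]
        calc |stepAvg W Q p.1 p.2 - stepAvg W Pp p.1 p.2| ^ 2 ≤ 2 ^ 2 :=
              pow_le_pow_left₀ (abs_nonneg _) this 2
          _ = 4 := by norm_num)
    have i3 : Integrable (fun p : I × I => 2 * ((W p.1 p.2 - stepAvg W Q p.1 p.2)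
        * (stepAvg W Q p.1 p.2 - stepAvg W Pp p.1 p.2))) := by
      apply integrable_of_bdd ((((graphon_meas hW).sub hBm).mul (hBm.sub hAm)).const_mul 2) 8
      intro p
      have b1 : |W p.1 p.2 - stepAvg W Q p.1 p.2| ≤ 2 :=
        (abs_sub _ _).trans (by
          linarith [hBb p, (abs_le.mpr ⟨by linarith [(hW.2.2 p.1 p.2).1], (hW.2.2 p.1 p.2).2⟩ :
            |W p.1 p.2| ≤ 1)])
      have b2 : |stepAvg W Q p.1 p.2 - stepAvg W Pp p.1 p.2| ≤ 2 :=
        (abs_sub _ _).trans (by linarith [hBb p, hAb p])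
      simp only [Pi.mul_apply, Pi.sub_apply]; rw [abs_mul, abs_mul, abs_two]
      nlinarith [abs_nonneg (W p.1 p.2 - stepAvg W Q p.1 p.2),
        abs_nonneg (stepAvg W Q p.1 p.2 - stepAvg W Pp p.1 p.2)]
    have horth : ∫ p : I × I, (W p.1 p.2 - stepAvg W Q p.1 p.2)
        * (stepAvg W Q p.1 p.2 - stepAvg W Pp p.1 p.2) = 0 :=
      orth' hW Q hBA
    have j12 : Integrable (fun p : I × I => (W p.1 p.2 - stepAvg W Q p.1 p.2) ^ 2
        + (stepAvg W Q p.1 p.2 - stepAvg W Pp p.1 p.2) ^ 2) := i1.add i2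
    have lhs : ∫ p : I × I, (W p.1 p.2 - stepAvg W Pp p.1 p.2) ^ 2
        = (∫ p : I × I, (W p.1 p.2 - stepAvg W Q p.1 p.2) ^ 2)
          + ∫ p : I × I, (stepAvg W Q p.1 p.2 - stepAvg W Pp p.1 p.2) ^ 2 := by
      rw [exp1, integral_add j12 i3, integral_add i1 i2, integral_const_mul, horth,
        mul_zero, add_zero]
    have eid1 := energy_identity hW Pp
    have eid2 := energy_identity hW Q
    linarith
  rw [hsplit]
  linarith [hcs, hpyth]


lemma cutNorm_set_nonempty (U : I → I → ℝ) :
    Set.Nonempty { r : ℝ | ∃ S T : Set I, MeasurableSet S ∧ MeasurableSet T ∧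
      r = |∫ p in S ×ˢ T, U p.1 p.2| } := by
  refine ⟨|∫ p in (∅ : Set I) ×ˢ (∅ : Set I), U p.1 p.2|, ∅, ∅,
    MeasurableSet.empty, MeasurableSet.empty, rfl⟩

lemma cutNorm_le {U : I → I → ℝ} {c : ℝ} (hc : 0 ≤ c)
    (h : ∀ S T : Set I, MeasurableSet S → MeasurableSet T →
      |∫ p in S ×ˢ T, U p.1 p.2| ≤ c) : cutNorm U ≤ c := by
  apply Real.sSup_le _ hc
  rintro r ⟨S, T, hS, hT, rfl⟩
  exact h S T hS hT

lemma exists_of_lt_cutNorm {U : I → I → ℝ} {c : ℝ} (h : c < cutNorm U) :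
    ∃ S T : Set I, MeasurableSet S ∧ MeasurableSet T ∧
      c < |∫ p in S ×ˢ T, U p.1 p.2| := by
  obtain ⟨r, hr, hcr⟩ := exists_lt_of_lt_csSup (cutNorm_set_nonempty U) h
  obtain ⟨S, T, hS, hT, rfl⟩ := hr
  exact ⟨S, T, hS, hT, hcr⟩

lemma cutNorm_le_sqrt {U : I → I → ℝ} (hm : Measurable (fun p : I × I => U p.1 p.2))
    (C : ℝ) (hC : ∀ p : I × I, |U p.1 p.2| ≤ C) :
    cutNorm U ≤ Real.sqrt (∫ p : I × I, (U p.1 p.2) ^ 2) := by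
  apply cutNorm_le (Real.sqrt_nonneg _)
  intro S T hS hT
  calc |∫ p in S ×ˢ T, U p.1 p.2| = Real.sqrt ((∫ p in S ×ˢ T, U p.1 p.2) ^ 2) :=
        (Real.sqrt_sq_eq_abs _).symm
    _ ≤ Real.sqrt (∫ p : I × I, (U p.1 p.2) ^ 2) :=
        Real.sqrt_le_sqrt (sq_setIntegral_le hm C hC _)

/-- The main iteration: either the cut norm is small, or the energy is large. -/
lemma iterate (hW : IsGraphon W) (ε : ℝ) (hε : 0 ≤ ε) (m : ℕ) :
    ∃ (ι : Type) (_ : Fintype ι) (Pp : Partn ι),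
      Fintype.card ι ≤ 4 ^ m ∧
      (cutNorm (fun x y => W x y - stepAvg W Pp x y) ≤ ε ∨
        (m : ℝ) * ε ^ 2 ≤ energy W Pp) := by
  induction m with
  | zero =>
    refine ⟨Unit, inferInstance, ⟨fun _ => Set.univ, fun _ => MeasurableSet.univ,
      Subsingleton.pairwise, by rw [Set.iUnion_const]⟩, by simp, Or.inr ?_⟩
    simp only [Nat.cast_zero, zero_mul]
    exact energy_nonneg _
  | succ m ih =>
    obtain ⟨ι, inst, Pp, hcard, hdisj⟩ := ih
    rcases hdisj with h | hE
    · exact ⟨ι, inst, Pp, hcard.trans (pow_le_pow_right₀ (by norm_num) (Nat.le_succ m)), Or.inl h⟩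
    by_cases hc : cutNorm (fun x y => W x y - stepAvg W Pp x y) ≤ ε
    · exact ⟨ι, inst, Pp, hcard.trans (pow_le_pow_right₀ (by norm_num) (Nat.le_succ m)), Or.inl hc⟩
    push_neg at hc
    obtain ⟨S, T, hS, hT, hgt⟩ := exists_of_lt_cutNorm hc
    have hgt' : ε < |∫ p in S ×ˢ T, (W p.1 p.2 - stepAvg W Pp p.1 p.2)| := hgt
    refine ⟨ι × Bool × Bool, inferInstance, Pp.refine S T hS hT, ?_, Or.inr ?_⟩
    · rw [Fintype.card_prod, Fintype.card_prod, Fintype.card_bool]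
      calc Fintype.card ι * (2 * 2) ≤ 4 ^ m * 4 := by
            apply Nat.mul_le_mul hcard; norm_num
        _ = 4 ^ (m + 1) := by ring
    · have key := energy_refine_ge hW Pp S T hS hT
      have hsq : ε ^ 2 ≤ (∫ p in S ×ˢ T, (W p.1 p.2 - stepAvg W Pp p.1 p.2)) ^ 2 := by
        rw [← sq_abs (∫ p in S ×ˢ T, (W p.1 p.2 - stepAvg W Pp p.1 p.2))]
        exact pow_le_pow_left₀ hε hgt'.le 2
      push_cast
      linarith

open Classical in
def padP {K : ℕ} {ι : Type} [Fintype ι] (e : ι ↪ Fin K) (Pp : Partn ι) : Fin K → Set I :=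
  fun j => if h : ∃ k, e k = j then Pp.P h.choose else ∅

open Classical in
def padw {K : ℕ} {ι : Type} [Fintype ι] (e : ι ↪ Fin K) (Pp : Partn ι) (W : I → I → ℝ) :
    Fin K → Fin K → ℝ :=
  fun j j' => if h : (∃ k, e k = j) ∧ (∃ k', e k' = j')
    then avg W (Pp.P h.1.choose) (Pp.P h.2.choose) else 0

variable {K : ℕ} {ι' : Type} [Fintype ι']

lemma padP_apply (e : ι' ↪ Fin K) (Pp : Partn ι') (k : ι') : padP e Pp (e k) = Pp.P k := by
  unfold padP
  have hex : ∃ k', e k' = e k := ⟨k, rfl⟩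
  rw [dif_pos hex]
  exact congrArg Pp.P (e.injective hex.choose_spec)

lemma padw_apply (e : ι' ↪ Fin K) (Pp : Partn ι') (k k' : ι') :
    padw e Pp W (e k) (e k') = avg W (Pp.P k) (Pp.P k') := by
  unfold padw
  have hex : (∃ k0, e k0 = e k) ∧ (∃ k0, e k0 = e k') := ⟨⟨k, rfl⟩, ⟨k', rfl⟩⟩
  rw [dif_pos hex]
  rw [congrArg Pp.P (e.injective hex.1.choose_spec),
    congrArg Pp.P (e.injective hex.2.choose_spec)]

lemma padP_meas (e : ι' ↪ Fin K) (Pp : Partn ι') (j : Fin K) : MeasurableSet (padP e Pp j) := by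
  unfold padP
  by_cases h : ∃ k, e k = j
  · rw [dif_pos h]; exact Pp.meas _
  · rw [dif_neg h]; exact MeasurableSet.empty

lemma padP_disj (e : ι' ↪ Fin K) (Pp : Partn ι') :
    Pairwise (Function.onFun Disjoint (padP e Pp)) := by
  intro j j' hne
  rw [Function.onFun]
  unfold padP
  by_cases h : ∃ k, e k = j
  · by_cases h' : ∃ k, e k = j'
    · rw [dif_pos h, dif_pos h']
      apply Pp.disj
      intro heq
      exact hne (by rw [← h.choose_spec, ← h'.choose_spec, heq])
    · rw [dif_neg h']; exact disjoint_bot_right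
  · rw [dif_neg h]; exact disjoint_bot_left

lemma padP_cover (e : ι' ↪ Fin K) (Pp : Partn ι') : (⋃ j, padP e Pp j) = Set.univ := by
  rw [Set.eq_univ_iff_forall]
  intro x
  obtain ⟨k, hk⟩ := Pp.exists_mem x
  exact Set.mem_iUnion.mpr ⟨e k, by rw [padP_apply e Pp k]; exact hk⟩

/-- Conversion of an abstract partition with at most `K` parts to a `Fin K`-indexed one. -/
lemma exists_finK (hW : IsGraphon W) {K : ℕ} {ι : Type} [Fintype ι] (Pp : Partn ι)
    (hcard : Fintype.card ι ≤ K) :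
    ∃ (P : Fin K → Set I) (w : Fin K → Fin K → ℝ),
      (∀ k, MeasurableSet (P k)) ∧
      Pairwise (Function.onFun Disjoint P) ∧
      (⋃ k, P k) = Set.univ ∧
      (∀ k k', w k k' ∈ Set.Icc (0 : ℝ) 1) ∧
      (∀ k k', w k k' = w k' k) ∧
      ∀ x y, stepFun P w x y = stepAvg W Pp x y := by
  classical
  have hcard' : Fintype.card ι ≤ Fintype.card (Fin K) := by rwa [Fintype.card_fin]
  obtain ⟨e⟩ := Function.Embedding.nonempty_iff_card_le.mpr hcard'
  refine ⟨padP e Pp, padw e Pp W, padP_meas e Pp, padP_disj e Pp, padP_cover e Pp, ?_, ?_, ?_⟩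
  · intro j j'
    unfold padw
    by_cases h : (∃ k, e k = j) ∧ (∃ k', e k' = j')
    · rw [dif_pos h]
      exact ⟨avg_nonneg hW _ _ (Pp.meas _) (Pp.meas _),
        avg_le_one hW _ _ (Pp.meas _) (Pp.meas _)⟩
    · rw [dif_neg h]; exact ⟨le_refl 0, by norm_num⟩
  · intro j j'
    unfold padw
    by_cases hj : ∃ k, e k = j
    · by_cases hj' : ∃ k, e k = j'
      · rw [dif_pos ⟨hj, hj'⟩, dif_pos ⟨hj', hj⟩]
        exact avg_symm hW _ _
      · rw [dif_neg (fun hcon => hj' hcon.2), dif_neg (fun hcon => hj' hcon.1)]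
    · rw [dif_neg (fun hcon => hj hcon.1), dif_neg (fun hcon => hj hcon.2)]
  · intro x y
    obtain ⟨k, hk⟩ := Pp.exists_mem x
    obtain ⟨k', hk'⟩ := Pp.exists_mem y
    have PK : Partn (Fin K) := ⟨padP e Pp, padP_meas e Pp, padP_disj e Pp, padP_cover e Pp⟩
    have hxP : x ∈ padP e Pp (e k) := by rw [padP_apply e Pp k]; exact hk
    have hyP : y ∈ padP e Pp (e k') := by rw [padP_apply e Pp k']; exact hk'
    have lhs : stepFun (padP e Pp) (padw e Pp W) x y = padw e Pp W (e k) (e k') := by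
      rw [stepFun_eq_stepF]
      exact stepF_apply ⟨padP e Pp, padP_meas e Pp, padP_disj e Pp, padP_cover e Pp⟩
        (padw e Pp W) hxP hyP
    rw [lhs, padw_apply e Pp k k']
    exact (stepF_apply Pp (fun k k' => avg W (Pp.P k) (Pp.P k')) hk hk').symm


lemma main_exists (hW : IsGraphon W) (K : ℕ) (hK : 2 ≤ K) :
    ∃ (ι : Type) (_ : Fintype ι) (Pp : Partn ι), Fintype.card ι ≤ K ∧
      cutNorm (fun x y => W x y - stepAvg W Pp x y) ≤
        2 / Real.sqrt (Real.log K) * l2Norm W := by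
  have hK1 : (1:ℝ) < (K:ℝ) := by exact_mod_cast lt_of_lt_of_le one_lt_two hK
  have hlogpos : 0 < Real.log K := Real.log_pos hK1
  have hIW2 : 0 ≤ ∫ p : I × I, (W p.1 p.2) ^ 2 := integral_nonneg (fun p => sq_nonneg _)
  have hl2 : l2Norm W = Real.sqrt (∫ p : I × I, (W p.1 p.2) ^ 2) := rfl
  have hl2nn : 0 ≤ l2Norm W := Real.sqrt_nonneg _
  set t : ℝ := 2 / Real.sqrt (Real.log K) * l2Norm W with ht
  have ht0 : 0 ≤ t := by positivity
  have hWb : ∀ p : I × I, |W p.1 p.2| ≤ 1 := fun p =>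
    abs_le.mpr ⟨by linarith [(hW.2.2 p.1 p.2).1], (hW.2.2 p.1 p.2).2⟩
  -- a general bound for the cut norm of W minus a step average
  have cutb : ∀ {ι : Type} [Fintype ι], ∀ (Pp : Partn ι),
      cutNorm (fun x y => W x y - stepAvg W Pp x y) ≤
        Real.sqrt ((∫ p : I × I, (W p.1 p.2) ^ 2) - energy W Pp) := by
    intro ι inst Pp
    have hm : Measurable (fun p : I × I => W p.1 p.2 - stepAvg W Pp p.1 p.2) :=
      (graphon_meas hW).sub (measurable_stepAvg Pp)
    have hb : ∀ p : I × I, |W p.1 p.2 - stepAvg W Pp p.1 p.2| ≤ 2 := fun p => by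
      have := stepAvg_mem hW Pp p.1 p.2
      have := hWb p
      rw [abs_le] at *
      constructor <;> [linarith [this.1, (stepAvg_mem hW Pp p.1 p.2).2];
        linarith [this.2, (stepAvg_mem hW Pp p.1 p.2).1]]
    have h1 := cutNorm_le_sqrt (U := fun x y => W x y - stepAvg W Pp x y) hm 2 hb
    rwa [energy_identity hW Pp] at h1
  by_cases hlog : Real.log K ≤ 4
  -- small K: trivial partition works
  · refine ⟨Unit, inferInstance, ⟨fun _ => Set.univ, fun _ => MeasurableSet.univ,
      Subsingleton.pairwise, by rw [Set.iUnion_const]⟩, by simpa using hK.trans' (by norm_num), ?_⟩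
    set P0 : Partn Unit := ⟨fun _ => Set.univ, fun _ => MeasurableSet.univ,
      Subsingleton.pairwise, by rw [Set.iUnion_const]⟩
    calc cutNorm (fun x y => W x y - stepAvg W P0 x y)
        ≤ Real.sqrt ((∫ p : I × I, (W p.1 p.2) ^ 2) - energy W P0) := cutb P0
      _ ≤ Real.sqrt (∫ p : I × I, (W p.1 p.2) ^ 2) :=
          Real.sqrt_le_sqrt (by linarith [energy_nonneg (W := W) P0])
      _ = l2Norm W := rfl
      _ ≤ t := by
          rw [ht]
          apply le_mul_of_one_le_left hl2nn
          rw [le_div_iff₀ (Real.sqrt_pos.mpr hlogpos)]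
          have : Real.sqrt (Real.log K) ≤ Real.sqrt 4 := Real.sqrt_le_sqrt hlog
          rw [show (4:ℝ) = 2^2 by norm_num, Real.sqrt_sq (by norm_num : (0:ℝ) ≤ 2)] at this
          linarith
  -- large K: iterate
  · push_neg at hlog
    have hlog2 : 0 < Real.log 2 := Real.log_pos one_lt_two
    have hlog2le : Real.log 2 ≤ 1 := by
      have := Real.add_one_le_exp (1:ℝ)
      have h2e : (2:ℝ) ≤ Real.exp 1 := by linarith
      calc Real.log 2 ≤ Real.log (Real.exp 1) :=
            Real.log_le_log (by norm_num) h2e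
        _ = 1 := Real.log_exp 1
    have hlog4 : Real.log 4 = 2 * Real.log 2 := by
      rw [show (4:ℝ) = 2^2 by norm_num, Real.log_pow]
      push_cast; ring
    have hlog4pos : 0 < Real.log 4 := by rw [hlog4]; linarith
    set m : ℕ := ⌊Real.log K / Real.log 4⌋₊ with hm
    have hm1 : (m:ℝ) ≤ Real.log K / Real.log 4 :=
      Nat.floor_le (by positivity)
    have hm2 : Real.log K / Real.log 4 < (m:ℝ) + 1 := Nat.lt_floor_add_one _
    -- 4^m ≤ K
    have h4mK : (4:ℝ)^m ≤ (K:ℝ) := by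
      have hlogle : Real.log ((4:ℝ)^m) ≤ Real.log K := by
        rw [Real.log_pow]
        calc (m:ℝ) * Real.log 4 ≤ (Real.log K / Real.log 4) * Real.log 4 :=
              mul_le_mul_of_nonneg_right hm1 hlog4pos.le
          _ = Real.log K := div_mul_cancel₀ _ hlog4pos.ne'
      rwa [Real.log_le_log_iff (by positivity) (by positivity)] at hlogle
    have hmK : 4^m ≤ K := by exact_mod_cast h4mK
    -- log K ≤ 4 m
    have step1 : Real.log K < 2 * Real.log 2 * ((m:ℝ) + 1) := by
      rw [hlog4] at hm2
      have := (div_lt_iff₀ (by positivity : (0:ℝ) < 2 * Real.log 2)).mp hm2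
      linarith
    have hb : 2 * Real.log 2 * ((m:ℝ) + 1) ≤ 2 * ((m:ℝ) + 1) := by
      nlinarith [Nat.cast_nonneg (α := ℝ) m]
    have hm2' : (2:ℝ) ≤ (m:ℝ) := by
      have h1m : (1:ℝ) < (m:ℝ) := by nlinarith
      have : 1 < m := by exact_mod_cast h1m
      exact_mod_cast this
    have h4m : Real.log K ≤ 4 * (m:ℝ) := by linarith
    -- run the iteration
    obtain ⟨ι, inst, Pp, hcard, hdisj⟩ := iterate hW t ht0 m
    refine ⟨ι, inst, Pp, hcard.trans hmK, ?_⟩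
    rcases hdisj with h | hE
    · exact h
    -- energy is too large: the approximation is exact
    have htsq : t ^ 2 = 4 / Real.log K * ∫ p : I × I, (W p.1 p.2) ^ 2 := by
      rw [ht, mul_pow, div_pow, Real.sq_sqrt hlogpos.le, hl2, Real.sq_sqrt hIW2]
      norm_num
    have hWlem : ∫ p : I × I, (W p.1 p.2) ^ 2 ≤ (m:ℝ) * t ^ 2 := by
      have hfr : 1 ≤ 4 * (m:ℝ) / Real.log K := by
        rw [le_div_iff₀ hlogpos]; linarith
      calc ∫ p : I × I, (W p.1 p.2) ^ 2 = 1 * ∫ p : I × I, (W p.1 p.2) ^ 2 := (one_mul _).symm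
        _ ≤ (4 * (m:ℝ) / Real.log K) * ∫ p : I × I, (W p.1 p.2) ^ 2 :=
            mul_le_mul_of_nonneg_right hfr hIW2
        _ = (m:ℝ) * t ^ 2 := by rw [htsq]; ring
    have hen : (∫ p : I × I, (W p.1 p.2) ^ 2) - energy W Pp ≤ 0 := by linarith
    calc cutNorm (fun x y => W x y - stepAvg W Pp x y)
        ≤ Real.sqrt ((∫ p : I × I, (W p.1 p.2) ^ 2) - energy W Pp) := cutb Pp
      _ ≤ Real.sqrt 0 := Real.sqrt_le_sqrt hen
      _ = 0 := Real.sqrt_zero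
      _ ≤ t := ht0

end WeakReg

/-- Weak Regularity Lemma (cut-norm form). -/
theorem weak_regularity_cutNorm (W : I → I → ℝ) (hW : IsGraphon W)
    (K : ℕ) (hK : 2 ≤ K) :
    ∃ (P : Fin K → Set I) (w : Fin K → Fin K → ℝ),
      (∀ k, MeasurableSet (P k)) ∧
      Pairwise (Function.onFun Disjoint P) ∧
      (⋃ k, P k) = Set.univ ∧
      (∀ k k', w k k' ∈ Set.Icc (0 : ℝ) 1) ∧
      (∀ k k', w k k' = w k' k) ∧
      cutNorm (fun x y => W x y - stepFun P w x y) ≤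
        2 / Real.sqrt (Real.log K) * l2Norm W := by
  obtain ⟨ι, inst, Pp, hcard, hcut⟩ := WeakReg.main_exists hW K hK
  obtain ⟨P, w, hmeas, hdisj, hcover, hmem, hsymm, hpt⟩ := WeakReg.exists_finK hW Pp hcard
  refine ⟨P, w, hmeas, hdisj, hcover, hmem, hsymm, ?_⟩
  have : (fun x y => W x y - stepFun P w x y) = fun x y => W x y - WeakReg.stepAvg W Pp x y := by
    funext x y
    rw [hpt]
  rw [this]
  exact hcut

end
end

section
/- For every graphon W : [0,1]² → [0,1] and every integer K ≥ 2, there exists a partition P of [0,1] into K measurable sets and a symmetric matrix (w_{kk'}) ∈ [0,1]^{K×K} such that the step function W_P satisfies δ_□(W, W_P) ≤ (2/√(log K)) · ‖W‖_{L²}. -/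
open MeasureTheory unitInterval

noncomputable section

namespace WR


/-- integrable from measurable + bounded -/
lemma integrable_of_bounded {f : I × I → ℝ} (hm : Measurable f) (C : ℝ)
    (hb : ∀ p, |f p| ≤ C) : Integrable f := by
  refine (integrable_const C).mono' hm.aestronglyMeasurable ?_
  filter_upwards with p
  simpa using hb p

lemma zero_mem_cutNormSet (U : I → I → ℝ) :
    (0:ℝ) ∈ { r : ℝ | ∃ S T : Set I, MeasurableSet S ∧ MeasurableSet T ∧
      r = |∫ p in S ×ˢ T, U p.1 p.2| } := by
  refine ⟨∅, ∅, MeasurableSet.empty, MeasurableSet.empty, ?_⟩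
  rw [Set.empty_prod, Measure.restrict_empty, integral_zero_measure, abs_zero]

lemma cutNorm_le {U : I → I → ℝ} {ε : ℝ}
    (h : ∀ S T : Set I, MeasurableSet S → MeasurableSet T →
      |∫ p in S ×ˢ T, U p.1 p.2| ≤ ε) : cutNorm U ≤ ε := by
  refine csSup_le ⟨0, zero_mem_cutNormSet U⟩ ?_
  rintro r ⟨S, T, hS, hT, rfl⟩
  exact h S T hS hT

lemma bddAbove_cutNormSet {U : I → I → ℝ}
    (hU : Integrable (fun p : I × I => U p.1 p.2)) :
    BddAbove { r : ℝ | ∃ S T : Set I, MeasurableSet S ∧ MeasurableSet T ∧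
      r = |∫ p in S ×ˢ T, U p.1 p.2| } := by
  refine ⟨∫ p : I × I, |U p.1 p.2|, ?_⟩
  rintro r ⟨S, T, hS, hT, rfl⟩
  calc |∫ p in S ×ˢ T, U p.1 p.2| ≤ ∫ p in S ×ˢ T, |U p.1 p.2| :=
        by simpa [Real.norm_eq_abs] using
          norm_integral_le_integral_norm (μ := volume.restrict (S ×ˢ T)) (fun p : I × I => U p.1 p.2)
    _ ≤ ∫ p : I × I, |U p.1 p.2| := by
        refine setIntegral_le_integral hU.abs ?_
        filter_upwards with p using abs_nonneg _

lemma cutNorm_nonneg {U : I → I → ℝ}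
    (hU : Integrable (fun p : I × I => U p.1 p.2)) : 0 ≤ cutNorm U :=
  le_csSup (bddAbove_cutNormSet hU) (zero_mem_cutNormSet U)

lemma exists_gt_of_lt_cutNorm {U : I → I → ℝ} {ε : ℝ}
    (h : ε < cutNorm U) :
    ∃ S T : Set I, MeasurableSet S ∧ MeasurableSet T ∧
      ε < |∫ p in S ×ˢ T, U p.1 p.2| := by
  obtain ⟨r, hr, hεr⟩ := exists_lt_of_lt_csSup ⟨0, zero_mem_cutNormSet U⟩ h
  obtain ⟨S, T, hS, hT, rfl⟩ := hr
  exact ⟨S, T, hS, hT, hεr⟩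


/-! ### Basic cell quantities -/

def cInt (W : I → I → ℝ) (A B : Set I) : ℝ := ∫ p in A ×ˢ B, W p.1 p.2

def mVol (A : Set I) : ℝ := (volume A).toReal

def cAvg (W : I → I → ℝ) (A B : Set I) : ℝ := cInt W A B / (mVol A * mVol B)

open Classical in
def stepF (W : I → I → ℝ) {ι : Type} [Fintype ι] (π : ι → Set I) : I → I → ℝ :=
  fun x y => ∑ k, ∑ k', if x ∈ π k ∧ y ∈ π k' then cAvg W (π k) (π k') else 0

def energy (W : I → I → ℝ) {ι : Type} [Fintype ι] (π : ι → Set I) : ℝ :=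
  ∑ k, ∑ k', (cInt W (π k) (π k')) ^ 2 / (mVol (π k) * mVol (π k'))

structure IsPart {ι : Type} [Fintype ι] (π : ι → Set I) : Prop where
  meas : ∀ k, MeasurableSet (π k)
  disj : Pairwise (Function.onFun Disjoint π)
  cover : ⋃ k, π k = Set.univ

lemma mVol_nonneg (A : Set I) : 0 ≤ mVol A := ENNReal.toReal_nonneg

lemma volume_ne_top (A : Set I) : volume A ≠ ⊤ := measure_ne_top _ _

lemma mVol_le_one (A : Set I) : mVol A ≤ 1 := by
  have h : volume A ≤ volume (Set.univ : Set I) := measure_mono (Set.subset_univ A)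
  rw [measure_univ] at h
  simpa [mVol] using ENNReal.toReal_le_of_le_ofReal zero_le_one (by simpa using h)

lemma volume_prod (A B : Set I) :
    volume (A ×ˢ B) = volume A * volume B := by
  rw [Measure.volume_eq_prod, Measure.prod_prod]

lemma mVol_prod (A B : Set I) : (volume (A ×ˢ B)).toReal = mVol A * mVol B := by
  rw [volume_prod, ENNReal.toReal_mul]; rfl

lemma setIntegral_one (A B : Set I) :
    ∫ _ in A ×ˢ B, (1:ℝ) = mVol A * mVol B := by
  rw [setIntegral_const, measureReal_def, mVol_prod, smul_eq_mul, mul_one]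

lemma cInt_eq_zero_of_mzero (W : I → I → ℝ) {A B : Set I}
    (h : mVol A * mVol B = 0) : cInt W A B = 0 := by
  have h0 : volume (A ×ˢ B) = 0 := by
    rw [volume_prod]
    have := mVol_prod A B
    rw [h] at this
    rw [← volume_prod]
    refine (ENNReal.toReal_eq_zero_iff _).1 this |>.resolve_right ?_
    rw [volume_prod]
    exact ENNReal.mul_ne_top (volume_ne_top A) (volume_ne_top B)
  unfold cInt
  rw [Measure.restrict_eq_zero.2 h0, integral_zero_measure]

/-! ### Integrability -/

lemma integrable_of_bounded' {f : I × I → ℝ} (hm : Measurable f) (C : ℝ)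
    (hb : ∀ p, |f p| ≤ C) : Integrable f := by
  refine (integrable_const C).mono' hm.aestronglyMeasurable ?_
  filter_upwards with p
  simpa using hb p

variable {W : I → I → ℝ}

lemma integrable_W (hm : Measurable (Function.uncurry W))
    (hb : ∀ x y, W x y ∈ Set.Icc (0:ℝ) 1) :
    Integrable (fun p : I × I => W p.1 p.2) := by
  refine integrable_of_bounded' hm 1 fun p => ?_
  have := hb p.1 p.2
  rw [abs_le]
  exact ⟨by linarith [this.1], this.2⟩

lemma integrable_W_sq (hm : Measurable (Function.uncurry W))
    (hb : ∀ x y, W x y ∈ Set.Icc (0:ℝ) 1) :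
    Integrable (fun p : I × I => (W p.1 p.2) ^ 2) := by
  refine integrable_of_bounded' (hm.pow_const 2) 1 fun p => ?_
  have h := hb p.1 p.2
  rw [abs_le]
  constructor
  · nlinarith [sq_nonneg (W p.1 p.2)]
  · nlinarith [h.1, h.2]

open Classical in
lemma measurable_stepF {ι : Type} [Fintype ι] {π : ι → Set I}
    (hπ : ∀ k, MeasurableSet (π k)) (w : ι → ι → ℝ) :
    Measurable (fun p : I × I =>
      (∑ k, ∑ k', if p.1 ∈ π k ∧ p.2 ∈ π k' then w k k' else 0 : ℝ)) := by
  refine Finset.measurable_sum _ fun k _ => Finset.measurable_sum _ fun k' _ => ?_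
  have hs : MeasurableSet {p : I × I | p.1 ∈ π k ∧ p.2 ∈ π k'} :=
    (hπ k).prod (hπ k')
  exact Measurable.ite hs measurable_const measurable_const

/-! ### cInt bounds, symmetry -/

lemma cInt_nonneg (hb : ∀ x y, W x y ∈ Set.Icc (0:ℝ) 1) (A B : Set I) :
    0 ≤ cInt W A B :=
  integral_nonneg fun p => (hb p.1 p.2).1

lemma cInt_le (hm : Measurable (Function.uncurry W))
    (hb : ∀ x y, W x y ∈ Set.Icc (0:ℝ) 1) {A B : Set I}
    (hA : MeasurableSet A) (hB : MeasurableSet B) :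
    cInt W A B ≤ mVol A * mVol B := by
  calc cInt W A B ≤ ∫ _ in A ×ˢ B, (1:ℝ) := by
        refine setIntegral_mono_on ((integrable_W hm hb).integrableOn)
          (integrable_const 1).integrableOn (hA.prod hB) fun p _ => (hb p.1 p.2).2
    _ = mVol A * mVol B := setIntegral_one A B

lemma cAvg_mem (hm : Measurable (Function.uncurry W))
    (hb : ∀ x y, W x y ∈ Set.Icc (0:ℝ) 1) {A B : Set I}
    (hA : MeasurableSet A) (hB : MeasurableSet B) :
    cAvg W A B ∈ Set.Icc (0:ℝ) 1 := by
  unfold cAvg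
  rcases eq_or_lt_of_le (mul_nonneg (mVol_nonneg A) (mVol_nonneg B)) with h | h
  · rw [← h, div_zero]; exact ⟨le_rfl, zero_le_one⟩
  · constructor
    · exact div_nonneg (cInt_nonneg hb A B) h.le
    · rw [div_le_one h]
      exact cInt_le hm hb hA hB

lemma cInt_symm (hsym : ∀ x y, W x y = W y x) (A B : Set I) :
    cInt W A B = cInt W B A := by
  unfold cInt
  have hmp : MeasurePreserving (Prod.swap : I × I → I × I) volume volume := by
    rw [Measure.volume_eq_prod]
    exact Measure.measurePreserving_swap ..
  have hemb : MeasurableEmbedding (Prod.swap : I × I → I × I) :=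
    MeasurableEquiv.prodComm.measurableEmbedding
  have h := hmp.setIntegral_preimage_emb hemb (fun p : I × I => W p.1 p.2) (B ×ˢ A)
  rw [← h, Set.preimage_swap_prod]
  refine integral_congr_ae (Filter.Eventually.of_forall fun p => ?_)
  simp only [Prod.fst_swap, Prod.snd_swap]
  exact hsym p.1 p.2

lemma cAvg_symm (hsym : ∀ x y, W x y = W y x) (A B : Set I) :
    cAvg W A B = cAvg W B A := by
  unfold cAvg
  rw [cInt_symm hsym, mul_comm]


/-! ### Additivity of set integrals over product partitions -/

lemma prod_disjoint_left {s s' t t' : Set I} (h : Disjoint s s') :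
    Disjoint (s ×ˢ t) (s' ×ˢ t') := by
  rw [Set.disjoint_left]
  rintro p ⟨h1, -⟩ ⟨h3, -⟩
  exact Set.disjoint_left.1 h h1 h3

lemma prod_disjoint_right {s s' t t' : Set I} (h : Disjoint t t') :
    Disjoint (s ×ˢ t) (s' ×ˢ t') := by
  rw [Set.disjoint_left]
  rintro p ⟨-, h2⟩ ⟨-, h4⟩
  exact Set.disjoint_left.1 h h2 h4

lemma integral_fin_iUnion {ι : Type} [Fintype ι] {s : ι → Set (I × I)}
    (hm : ∀ i, MeasurableSet (s i)) (hd : Pairwise (Function.onFun Disjoint s))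
    {f : I × I → ℝ} (hf : Integrable f) :
    ∫ p in ⋃ i, s i, f p = ∑ i, ∫ p in s i, f p := by
  rw [integral_iUnion hm hd hf.integrableOn, tsum_fintype]

lemma integral_prod_iUnion {ιa ιb : Type} [Fintype ιa] [Fintype ιb]
    {A : ιa → Set I} {B : ιb → Set I}
    (hAm : ∀ i, MeasurableSet (A i)) (hAd : Pairwise (Function.onFun Disjoint A))
    (hBm : ∀ j, MeasurableSet (B j)) (hBd : Pairwise (Function.onFun Disjoint B))
    {f : I × I → ℝ} (hf : Integrable f) :
    ∫ p in (⋃ i, A i) ×ˢ (⋃ j, B j), f p = ∑ i, ∑ j, ∫ p in A i ×ˢ B j, f p := by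
  rw [Set.iUnion_prod_const]
  rw [integral_fin_iUnion (fun i => (hAm i).prod (MeasurableSet.iUnion fun j => hBm j))
    (fun i i' hne => prod_disjoint_left (hAd hne)) hf]
  refine Finset.sum_congr rfl fun i _ => ?_
  rw [Set.prod_iUnion]
  exact integral_fin_iUnion (fun j => (hAm i).prod (hBm j))
    (fun j j' hne => prod_disjoint_right (hBd hne)) hf

/-! ### Quadrant splitting -/

def qcell (A S T : Set I) : Bool × Bool → Set I :=
  fun q => A ∩ (cond q.1 S Sᶜ) ∩ (cond q.2 T Tᶜ)

lemma qcell_meas {A S T : Set I} (hA : MeasurableSet A) (hS : MeasurableSet S)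
    (hT : MeasurableSet T) (q : Bool × Bool) : MeasurableSet (qcell A S T q) := by
  refine (hA.inter ?_).inter ?_
  · cases q.1 <;> [exact hS.compl; exact hS]
  · cases q.2 <;> [exact hT.compl; exact hT]

lemma qcell_subset (A S T : Set I) (q : Bool × Bool) : qcell A S T q ⊆ A :=
  fun _ h => h.1.1

lemma qcell_disj (A S T : Set I) : Pairwise (Function.onFun Disjoint (qcell A S T)) := by
  rintro ⟨b1, b2⟩ ⟨b3, b4⟩ hne
  have hb : b1 ≠ b3 ∨ b2 ≠ b4 := by
    by_contra h
    push_neg at h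
    exact hne (by rw [h.1, h.2])
  rw [Function.onFun, Set.disjoint_left]
  rintro x ⟨⟨-, hxS⟩, hxT⟩ ⟨⟨-, hxS'⟩, hxT'⟩
  rcases hb with h | h
  · cases b1 <;> cases b3 <;> simp_all
  · cases b2 <;> cases b4 <;> simp_all

lemma qcell_iUnion (A S T : Set I) : ⋃ q, qcell A S T q = A := by
  ext x
  simp only [Set.mem_iUnion]
  constructor
  · rintro ⟨q, ⟨⟨h, -⟩, -⟩⟩
    exact h
  · intro hx
    by_cases hS : x ∈ S <;> by_cases hT : x ∈ T
    · exact ⟨(true, true), ⟨⟨hx, hS⟩, hT⟩⟩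
    · exact ⟨(true, false), ⟨⟨hx, hS⟩, hT⟩⟩
    · exact ⟨(false, true), ⟨⟨hx, hS⟩, hT⟩⟩
    · exact ⟨(false, false), ⟨⟨hx, hS⟩, hT⟩⟩

/-! ### Slices for S and T -/

def sliceS {ι : Type} (π : ι → Set I) (S T : Set I) : ι × Bool → Set I :=
  fun u => π u.1 ∩ S ∩ (cond u.2 T Tᶜ)

def sliceT {ι : Type} (π : ι → Set I) (S T : Set I) : ι × Bool → Set I :=
  fun u => π u.1 ∩ (cond u.2 S Sᶜ) ∩ T

lemma sliceS_eq {ι : Type} (π : ι → Set I) (S T : Set I) (u : ι × Bool) :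
    sliceS π S T u = qcell (π u.1) S T (true, u.2) := rfl

lemma sliceS_meas {ι : Type} {π : ι → Set I} (hπ : ∀ k, MeasurableSet (π k))
    {S T : Set I} (hS : MeasurableSet S) (hT : MeasurableSet T) (u : ι × Bool) :
    MeasurableSet (sliceS π S T u) := by
  rw [sliceS_eq]
  exact qcell_meas (hπ u.1) hS hT _

lemma sliceT_meas {ι : Type} {π : ι → Set I} (hπ : ∀ k, MeasurableSet (π k))
    {S T : Set I} (hS : MeasurableSet S) (hT : MeasurableSet T) (u : ι × Bool) :
    MeasurableSet (sliceT π S T u) := by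
  have : sliceT π S T u = qcell (π u.1) S T (u.2, true) := rfl
  rw [this]
  exact qcell_meas (hπ u.1) hS hT _

lemma sliceS_disj {ι : Type} [Fintype ι] {π : ι → Set I}
    (hd : Pairwise (Function.onFun Disjoint π)) (S T : Set I) :
    Pairwise (Function.onFun Disjoint (sliceS π S T)) := by
  rintro ⟨k, b⟩ ⟨k', b'⟩ hne
  rcases eq_or_ne k k' with rfl | hk
  · have hb : b ≠ b' := fun h => hne (by rw [h])
    rw [Function.onFun, Set.disjoint_left]
    rintro x ⟨-, hxT⟩ ⟨-, hxT'⟩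
    cases b <;> cases b' <;> simp_all
  · exact Disjoint.mono (fun x h => h.1.1) (fun x h => h.1.1) (hd hk)

lemma sliceT_disj {ι : Type} [Fintype ι] {π : ι → Set I}
    (hd : Pairwise (Function.onFun Disjoint π)) (S T : Set I) :
    Pairwise (Function.onFun Disjoint (sliceT π S T)) := by
  rintro ⟨k, b⟩ ⟨k', b'⟩ hne
  rcases eq_or_ne k k' with rfl | hk
  · have hb : b ≠ b' := fun h => hne (by rw [h])
    rw [Function.onFun, Set.disjoint_left]
    rintro x ⟨⟨-, hxS⟩, -⟩ ⟨⟨-, hxS'⟩, -⟩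
    cases b <;> cases b' <;> simp_all
  · exact Disjoint.mono (fun x h => h.1.1) (fun x h => h.1.1) (hd hk)

lemma sliceS_iUnion {ι : Type} [Fintype ι] {π : ι → Set I}
    (hcov : ⋃ k, π k = Set.univ) (S T : Set I) :
    ⋃ u, sliceS π S T u = S := by
  ext x
  simp only [Set.mem_iUnion, sliceS]
  constructor
  · rintro ⟨u, ⟨⟨-, h⟩, -⟩⟩
    exact h
  · intro hx
    have : x ∈ ⋃ k, π k := by rw [hcov]; trivial
    obtain ⟨k, hk⟩ := Set.mem_iUnion.1 this
    by_cases hT : x ∈ T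
    · exact ⟨(k, true), ⟨⟨hk, hx⟩, hT⟩⟩
    · exact ⟨(k, false), ⟨⟨hk, hx⟩, hT⟩⟩

lemma sliceT_iUnion {ι : Type} [Fintype ι] {π : ι → Set I}
    (hcov : ⋃ k, π k = Set.univ) (S T : Set I) :
    ⋃ u, sliceT π S T u = T := by
  ext x
  simp only [Set.mem_iUnion, sliceT]
  constructor
  · rintro ⟨u, ⟨-, h⟩⟩
    exact h
  · intro hx
    have : x ∈ ⋃ k, π k := by rw [hcov]; trivial
    obtain ⟨k, hk⟩ := Set.mem_iUnion.1 this
    by_cases hS : x ∈ S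
    · exact ⟨(k, true), ⟨⟨hk, hS⟩, hx⟩⟩
    · exact ⟨(k, false), ⟨⟨hk, hS⟩, hx⟩⟩


/-! ### stepF evaluation and integrals -/

open Classical in
lemma stepF_eval {ι : Type} [Fintype ι] {π : ι → Set I}
    (hd : Pairwise (Function.onFun Disjoint π)) {x y : I} {k k' : ι}
    (hx : x ∈ π k) (hy : y ∈ π k') :
    stepF W π x y = cAvg W (π k) (π k') := by
  unfold stepF
  rw [Finset.sum_eq_single k]
  · rw [Finset.sum_eq_single k']
    · rw [if_pos ⟨hx, hy⟩]
    · intro j _ hj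
      rw [if_neg]
      rintro ⟨-, hyj⟩
      exact Set.disjoint_left.1 (hd hj) hyj hy
    · intro h
      exact (h (Finset.mem_univ k')).elim
  · intro j _ hj
    refine Finset.sum_eq_zero fun j' _ => ?_
    rw [if_neg]
    rintro ⟨hxj, -⟩
    exact Set.disjoint_left.1 (hd hj) hxj hx
  · intro h
    exact (h (Finset.mem_univ k)).elim

lemma stepF_setIntegral {ι : Type} [Fintype ι] {π : ι → Set I}
    (hd : Pairwise (Function.onFun Disjoint π)) {k k' : ι} {A B : Set I}
    (hA : MeasurableSet A) (hB : MeasurableSet B)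
    (hAk : A ⊆ π k) (hBk : B ⊆ π k') :
    ∫ p in A ×ˢ B, stepF W π p.1 p.2
      = cAvg W (π k) (π k') * (mVol A * mVol B) := by
  have heq : Set.EqOn (fun p : I × I => stepF W π p.1 p.2)
      (fun _ => cAvg W (π k) (π k')) (A ×ˢ B) := fun p hp =>
    stepF_eval hd (hAk hp.1) (hBk hp.2)
  rw [setIntegral_congr_fun (hA.prod hB) heq, setIntegral_const, measureReal_def, mVol_prod,
    smul_eq_mul, mul_comm]

/-! ### The Engel-form identity -/

lemma engel {α : Type} [Fintype α] (x m : α → ℝ) (hm : ∀ q, 0 ≤ m q)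
    (h0 : ∀ q, m q = 0 → x q = 0) :
    ∑ q, (x q - ((∑ r, x r) / (∑ r, m r)) * m q) ^ 2 / m q
      = (∑ q, (x q) ^ 2 / m q) - (∑ q, x q) ^ 2 / (∑ r, m r) := by
  set c : ℝ := (∑ r, x r) / (∑ r, m r) with hc
  have per : ∀ q, (x q - c * m q) ^ 2 / m q
      = (x q) ^ 2 / m q - 2 * c * x q + c ^ 2 * m q := by
    intro q
    rcases eq_or_lt_of_le (hm q) with h | h
    · rw [← h, h0 q h.symm]
      simp
    · field_simp
      ring
  rw [Finset.sum_congr rfl fun q _ => per q]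
  rw [Finset.sum_add_distrib, Finset.sum_sub_distrib, ← Finset.mul_sum, ← Finset.mul_sum]
  rcases eq_or_lt_of_le (Finset.sum_nonneg fun q _ => hm q) with hμ | hμ
  · have hall : ∀ q ∈ Finset.univ, m q = 0 := by
      intro q hq
      exact (Finset.sum_eq_zero_iff_of_nonneg fun r _ => hm r).1 hμ.symm q hq
    have hx0 : ∀ q ∈ Finset.univ, x q = 0 := fun q hq => h0 q (hall q hq)
    rw [Finset.sum_eq_zero hx0, ← hμ]
    simp
  · have hμ' : (∑ r, m r) ≠ 0 := ne_of_gt hμ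
    have h1 : c * (∑ r, m r) = ∑ r, x r := div_mul_cancel₀ _ hμ'
    have h2 : (∑ q, x q) ^ 2 / (∑ r, m r) = c * ∑ q, x q := by
      rw [hc]
      field_simp
    have h3 : c ^ 2 * ∑ r, m r = c * ∑ r, x r := by rw [pow_two, mul_assoc, h1]
    rw [h2, h3]
    ring

/-! ### Total mass -/

lemma total_mass {ι : Type} [Fintype ι] {π : ι → Set I} (hπ : IsPart π) :
    ∑ k, ∑ k', mVol (π k) * mVol (π k') = 1 := by
  have h := integral_prod_iUnion (A := π) (B := π) hπ.meas hπ.disj hπ.meas hπ.disj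
    (f := fun _ => (1:ℝ)) (integrable_const 1)
  beta_reduce at h
  rw [hπ.cover, Set.univ_prod_univ, Measure.restrict_univ] at h
  calc ∑ k, ∑ k', mVol (π k) * mVol (π k')
      = ∑ k, ∑ k', ∫ _ in π k ×ˢ π k', (1:ℝ) :=
        Finset.sum_congr rfl fun k _ => Finset.sum_congr rfl fun k' _ =>
          (setIntegral_one _ _).symm
    _ = ∫ _ : I × I, (1:ℝ) := h.symm
    _ = 1 := by simp


/-! ### Energy bounds -/

lemma energy_nonneg {ι : Type} [Fintype ι] (π : ι → Set I) : 0 ≤ energy W π :=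
  Finset.sum_nonneg fun k _ => Finset.sum_nonneg fun k' _ =>
    div_nonneg (sq_nonneg _) (mul_nonneg (mVol_nonneg _) (mVol_nonneg _))

lemma cell_sq_bound (hm : Measurable (Function.uncurry W))
    (hb : ∀ x y, W x y ∈ Set.Icc (0:ℝ) 1) {A B : Set I}
    (hA : MeasurableSet A) (hB : MeasurableSet B) :
    (cInt W A B) ^ 2 / (mVol A * mVol B) ≤ ∫ p in A ×ˢ B, (W p.1 p.2) ^ 2 := by
  have hQ : 0 ≤ ∫ p in A ×ˢ B, (W p.1 p.2) ^ 2 :=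
    integral_nonneg fun p => sq_nonneg _
  rcases eq_or_lt_of_le (mul_nonneg (mVol_nonneg A) (mVol_nonneg B)) with h | h
  · rw [← h, div_zero]
    exact hQ
  · set a := cInt W A B with ha
    set m := mVol A * mVol B with hmdef
    set c := a / m with hcdef
    have hint2 : IntegrableOn (fun p : I × I => (W p.1 p.2) ^ 2) (A ×ˢ B) :=
      (integrable_W_sq hm hb).integrableOn
    have hint1 : IntegrableOn (fun p : I × I => W p.1 p.2) (A ×ˢ B) :=
      (integrable_W hm hb).integrableOn
    have hconst : IntegrableOn (fun _ : I × I => c ^ 2) (A ×ˢ B) :=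
      integrableOn_const (measure_ne_top _ _) enorm_ne_top
    have expand : ∫ p in A ×ˢ B, (W p.1 p.2 - c) ^ 2
        = (∫ p in A ×ˢ B, (W p.1 p.2) ^ 2) - 2 * c * a + c ^ 2 * m := by
      have hpt : ∀ p : I × I, (W p.1 p.2 - c) ^ 2
          = ((W p.1 p.2) ^ 2 - 2 * c * W p.1 p.2) + c ^ 2 := fun p => by ring
      have hwa : (∫ p in A ×ˢ B, W p.1 p.2) = a := rfl
      calc ∫ p in A ×ˢ B, (W p.1 p.2 - c) ^ 2
          = ∫ p in A ×ˢ B, (((W p.1 p.2) ^ 2 - 2 * c * W p.1 p.2) + c ^ 2) :=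
            integral_congr_ae (Filter.Eventually.of_forall hpt)
        _ = (∫ p in A ×ˢ B, ((W p.1 p.2) ^ 2 - 2 * c * W p.1 p.2))
              + ∫ _ in A ×ˢ B, (c ^ 2 : ℝ) :=
            integral_add (hint2.sub (hint1.const_mul (2 * c))) hconst
        _ = (∫ p in A ×ˢ B, (W p.1 p.2) ^ 2) - (∫ p in A ×ˢ B, 2 * c * W p.1 p.2)
              + ∫ _ in A ×ˢ B, (c ^ 2 : ℝ) := by
            rw [integral_sub hint2 (hint1.const_mul (2 * c))]
        _ = (∫ p in A ×ˢ B, (W p.1 p.2) ^ 2) - 2 * c * (∫ p in A ×ˢ B, W p.1 p.2)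
              + c ^ 2 * m := by
            rw [integral_const_mul, setIntegral_const, measureReal_def, mVol_prod, smul_eq_mul, ← hmdef,
              mul_comm m (c ^ 2)]
        _ = (∫ p in A ×ˢ B, (W p.1 p.2) ^ 2) - 2 * c * a + c ^ 2 * m := by rw [hwa]
    have hpos : 0 ≤ ∫ p in A ×ˢ B, (W p.1 p.2 - c) ^ 2 :=
      integral_nonneg fun p => sq_nonneg _
    have hc : c * m = a := div_mul_cancel₀ _ (ne_of_gt h)
    have h2 : c ^ 2 * m = c * a := by rw [pow_two, mul_assoc, hc]
    have h3 : a ^ 2 / m = a * c := by rw [pow_two, mul_div_assoc, hcdef]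
    have h4 : a * c = c * a := mul_comm _ _
    linarith [expand ▸ hpos]

lemma energy_le (hm : Measurable (Function.uncurry W))
    (hb : ∀ x y, W x y ∈ Set.Icc (0:ℝ) 1) {ι : Type} [Fintype ι]
    {π : ι → Set I} (hπ : IsPart π) :
    energy W π ≤ ∫ p : I × I, (W p.1 p.2) ^ 2 := by
  have h := integral_prod_iUnion (A := π) (B := π) hπ.meas hπ.disj hπ.meas hπ.disj
    (f := fun p : I × I => (W p.1 p.2) ^ 2) (integrable_W_sq hm hb)
  beta_reduce at h
  rw [hπ.cover, Set.univ_prod_univ, Measure.restrict_univ] at h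
  rw [h]
  exact Finset.sum_le_sum fun k _ => Finset.sum_le_sum fun k' _ =>
    cell_sq_bound hm hb (hπ.meas k) (hπ.meas k')

/-! ### Refinement -/

def refine {ι : Type} (π : ι → Set I) (S T : Set I) : ι × (Bool × Bool) → Set I :=
  fun u => qcell (π u.1) S T u.2

lemma refine_isPart {ι : Type} [Fintype ι] {π : ι → Set I} (hπ : IsPart π)
    {S T : Set I} (hS : MeasurableSet S) (hT : MeasurableSet T) :
    IsPart (refine π S T) where
  meas u := qcell_meas (hπ.meas u.1) hS hT u.2
  disj := by
    rintro ⟨k, q⟩ ⟨k', q'⟩ hne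
    rcases eq_or_ne k k' with rfl | hk
    · have hq : q ≠ q' := fun h => hne (by rw [h])
      exact qcell_disj (π k) S T hq
    · exact Disjoint.mono (qcell_subset _ _ _ _) (qcell_subset _ _ _ _) (hπ.disj hk)
  cover := by
    rw [Set.eq_univ_iff_forall]
    intro z
    have : z ∈ ⋃ k, π k := by rw [hπ.cover]; trivial
    obtain ⟨k, hk⟩ := Set.mem_iUnion.1 this
    rw [← qcell_iUnion (π k) S T] at hk
    obtain ⟨q, hq⟩ := Set.mem_iUnion.1 hk
    exact Set.mem_iUnion.2 ⟨(k, q), hq⟩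


/-! ### Cell sums over the quadrant refinement -/

lemma qcell_cInt_sum (hm : Measurable (Function.uncurry W))
    (hb : ∀ x y, W x y ∈ Set.Icc (0:ℝ) 1) {A B S T : Set I}
    (hA : MeasurableSet A) (hB : MeasurableSet B)
    (hS : MeasurableSet S) (hT : MeasurableSet T) :
    ∑ q : Bool × Bool, ∑ q' : Bool × Bool,
      cInt W (qcell A S T q) (qcell B S T q') = cInt W A B := by
  have h := integral_prod_iUnion (A := qcell A S T) (B := qcell B S T)
    (qcell_meas hA hS hT) (qcell_disj A S T)
    (qcell_meas hB hS hT) (qcell_disj B S T)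
    (f := fun p : I × I => W p.1 p.2) (integrable_W hm hb)
  beta_reduce at h
  rw [qcell_iUnion, qcell_iUnion] at h
  exact h.symm

lemma qcell_mass_sum {A B S T : Set I}
    (hA : MeasurableSet A) (hB : MeasurableSet B)
    (hS : MeasurableSet S) (hT : MeasurableSet T) :
    ∑ q : Bool × Bool, ∑ q' : Bool × Bool,
      mVol (qcell A S T q) * mVol (qcell B S T q') = mVol A * mVol B := by
  have h := integral_prod_iUnion (A := qcell A S T) (B := qcell B S T)
    (qcell_meas hA hS hT) (qcell_disj A S T)
    (qcell_meas hB hS hT) (qcell_disj B S T)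
    (f := fun _ : I × I => (1:ℝ)) (integrable_const 1)
  beta_reduce at h
  rw [qcell_iUnion, qcell_iUnion] at h
  calc ∑ q : Bool × Bool, ∑ q' : Bool × Bool,
        mVol (qcell A S T q) * mVol (qcell B S T q')
      = ∑ q : Bool × Bool, ∑ q' : Bool × Bool,
          ∫ _ in qcell A S T q ×ˢ qcell B S T q', (1:ℝ) :=
        Finset.sum_congr rfl fun q _ => Finset.sum_congr rfl fun q' _ =>
          (setIntegral_one _ _).symm
    _ = ∫ _ in A ×ˢ B, (1:ℝ) := h.symm
    _ = mVol A * mVol B := setIntegral_one A B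

lemma cell_engel (hm : Measurable (Function.uncurry W))
    (hb : ∀ x y, W x y ∈ Set.Icc (0:ℝ) 1) {A B S T : Set I}
    (hA : MeasurableSet A) (hB : MeasurableSet B)
    (hS : MeasurableSet S) (hT : MeasurableSet T) :
    ∑ q : Bool × Bool, ∑ q' : Bool × Bool,
      (cInt W (qcell A S T q) (qcell B S T q')
        - cAvg W A B * (mVol (qcell A S T q) * mVol (qcell B S T q'))) ^ 2
        / (mVol (qcell A S T q) * mVol (qcell B S T q'))
      = (∑ q : Bool × Bool, ∑ q' : Bool × Bool,
          (cInt W (qcell A S T q) (qcell B S T q')) ^ 2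
            / (mVol (qcell A S T q) * mVol (qcell B S T q')))
        - (cInt W A B) ^ 2 / (mVol A * mVol B) := by
  classical
  have key := engel (fun qq : (Bool × Bool) × (Bool × Bool) =>
      cInt W (qcell A S T qq.1) (qcell B S T qq.2))
    (fun qq => mVol (qcell A S T qq.1) * mVol (qcell B S T qq.2))
    (fun qq => mul_nonneg (mVol_nonneg _) (mVol_nonneg _))
    (fun qq h => cInt_eq_zero_of_mzero W h)
  beta_reduce at key
  have hsx : (∑ r : (Bool × Bool) × (Bool × Bool),
      cInt W (qcell A S T r.1) (qcell B S T r.2)) = cInt W A B := by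
    rw [Fintype.sum_prod_type]
    exact qcell_cInt_sum hm hb hA hB hS hT
  have hsm : (∑ r : (Bool × Bool) × (Bool × Bool),
      mVol (qcell A S T r.1) * mVol (qcell B S T r.2)) = mVol A * mVol B := by
    rw [Fintype.sum_prod_type]
    exact qcell_mass_sum hA hB hS hT
  rw [hsx, hsm] at key
  have hcavg : (cInt W A B) / (mVol A * mVol B) = cAvg W A B := rfl
  rw [hcavg] at key
  simpa only [Fintype.sum_prod_type] using key


/-! ### Regrouping sums over product index types -/

lemma sum_prod_regroup {ι κ : Type} [Fintype ι] [Fintype κ] (f : ι × κ → ι × κ → ℝ) :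
    ∑ u, ∑ v, f u v = ∑ k, ∑ k', ∑ q, ∑ q', f (k, q) (k', q') := by
  rw [Fintype.sum_prod_type]
  refine Finset.sum_congr rfl fun k _ => ?_
  have h1 : ∀ q, (∑ v : ι × κ, f (k, q) v) = ∑ k', ∑ q', f (k, q) (k', q') :=
    fun q => Fintype.sum_prod_type ..
  rw [Finset.sum_congr rfl fun q _ => h1 q]
  exact Finset.sum_comm

lemma energy_refine (hm : Measurable (Function.uncurry W))
    (hb : ∀ x y, W x y ∈ Set.Icc (0:ℝ) 1) {ι : Type} [Fintype ι]
    {π : ι → Set I} (hπ : IsPart π) {S T : Set I}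
    (hS : MeasurableSet S) (hT : MeasurableSet T) :
    energy W (refine π S T) = energy W π
      + ∑ k, ∑ k', ∑ q : Bool × Bool, ∑ q' : Bool × Bool,
          (cInt W (qcell (π k) S T q) (qcell (π k') S T q')
            - cAvg W (π k) (π k')
              * (mVol (qcell (π k) S T q) * mVol (qcell (π k') S T q'))) ^ 2
            / (mVol (qcell (π k) S T q) * mVol (qcell (π k') S T q')) := by
  have hre : energy W (refine π S T)
      = ∑ k, ∑ k', ∑ q : Bool × Bool, ∑ q' : Bool × Bool,
          (cInt W (qcell (π k) S T q) (qcell (π k') S T q')) ^ 2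
            / (mVol (qcell (π k) S T q) * mVol (qcell (π k') S T q')) := by
    unfold energy
    exact sum_prod_regroup _
  rw [hre]
  have hper : ∀ k k' : ι,
      (∑ q : Bool × Bool, ∑ q' : Bool × Bool,
        (cInt W (qcell (π k) S T q) (qcell (π k') S T q')) ^ 2
          / (mVol (qcell (π k) S T q) * mVol (qcell (π k') S T q')))
      = (cInt W (π k) (π k')) ^ 2 / (mVol (π k) * mVol (π k'))
        + ∑ q : Bool × Bool, ∑ q' : Bool × Bool,
          (cInt W (qcell (π k) S T q) (qcell (π k') S T q')
            - cAvg W (π k) (π k')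
              * (mVol (qcell (π k) S T q) * mVol (qcell (π k') S T q'))) ^ 2
            / (mVol (qcell (π k) S T q) * mVol (qcell (π k') S T q')) := by
    intro k k'
    have := cell_engel hm hb (hπ.meas k) (hπ.meas k') hS hT
    linarith
  rw [Finset.sum_congr rfl fun k _ => Finset.sum_congr rfl fun k' _ => hper k k']
  rw [Finset.sum_congr rfl fun k (_ : k ∈ Finset.univ) => Finset.sum_add_distrib,
    Finset.sum_add_distrib]
  rfl

/-! ### Integrability of the step function -/

open Classical in
lemma stepF_integrable (hm : Measurable (Function.uncurry W))
    (hb : ∀ x y, W x y ∈ Set.Icc (0:ℝ) 1) {ι : Type} [Fintype ι]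
    {π : ι → Set I} (hπm : ∀ k, MeasurableSet (π k)) :
    Integrable (fun p : I × I => stepF W π p.1 p.2) := by
  refine integrable_of_bounded' (measurable_stepF hπm
    (fun k k' => cAvg W (π k) (π k')))
    ((Fintype.card ι : ℝ) * (Fintype.card ι : ℝ)) fun p => ?_
  calc |stepF W π p.1 p.2|
      ≤ ∑ k, ∑ k', |if p.1 ∈ π k ∧ p.2 ∈ π k'
          then cAvg W (π k) (π k') else 0| := by
        refine (Finset.abs_sum_le_sum_abs _ _).trans ?_
        exact Finset.sum_le_sum fun k _ => Finset.abs_sum_le_sum_abs _ _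
    _ ≤ ∑ _k : ι, ∑ _k' : ι, (1:ℝ) := by
        refine Finset.sum_le_sum fun k _ => Finset.sum_le_sum fun k' _ => ?_
        split
        · rw [abs_of_nonneg (cAvg_mem hm hb (hπm k) (hπm k')).1]
          exact (cAvg_mem hm hb (hπm k) (hπm k')).2
        · simp
    _ = (Fintype.card ι : ℝ) * (Fintype.card ι : ℝ) := by
        simp [Finset.card_univ, mul_comm]

/-! ### The cut integral over S × T against the refinement -/

open Classical in
lemma D_eq (hm : Measurable (Function.uncurry W))
    (hb : ∀ x y, W x y ∈ Set.Icc (0:ℝ) 1) {ι : Type} [Fintype ι]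
    {π : ι → Set I} (hπ : IsPart π) {S T : Set I}
    (hS : MeasurableSet S) (hT : MeasurableSet T) :
    ∫ p in S ×ˢ T, (W p.1 p.2 - stepF W π p.1 p.2)
      = ∑ u : ι × Bool, ∑ v : ι × Bool,
          (cInt W (qcell (π u.1) S T (true, u.2)) (qcell (π v.1) S T (v.2, true))
            - cAvg W (π u.1) (π v.1)
              * (mVol (qcell (π u.1) S T (true, u.2))
                  * mVol (qcell (π v.1) S T (v.2, true)))) := by
  have hint : Integrable (fun p : I × I => W p.1 p.2 - stepF W π p.1 p.2) :=
    (integrable_W hm hb).sub (stepF_integrable hm hb hπ.meas)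
  have h := integral_prod_iUnion (A := sliceS π S T) (B := sliceT π S T)
    (sliceS_meas hπ.meas hS hT) (sliceS_disj hπ.disj S T)
    (sliceT_meas hπ.meas hS hT) (sliceT_disj hπ.disj S T) hint
  beta_reduce at h
  rw [sliceS_iUnion hπ.cover, sliceT_iUnion hπ.cover] at h
  rw [h]
  refine Finset.sum_congr rfl fun u _ => Finset.sum_congr rfl fun v _ => ?_
  have hsub : ∫ p in sliceS π S T u ×ˢ sliceT π S T v,
        (W p.1 p.2 - stepF W π p.1 p.2)
      = (∫ p in sliceS π S T u ×ˢ sliceT π S T v, W p.1 p.2)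
        - ∫ p in sliceS π S T u ×ˢ sliceT π S T v, stepF W π p.1 p.2 :=
    integral_sub (integrable_W hm hb).integrableOn
      (stepF_integrable hm hb hπ.meas).integrableOn
  rw [hsub, stepF_setIntegral hπ.disj (sliceS_meas hπ.meas hS hT u)
    (sliceT_meas hπ.meas hS hT v) (fun x hx => hx.1.1) (fun x hx => hx.1.1)]
  rfl


/-! ### The key energy-increment inequality -/

def coreM {ι : Type} (π : ι → Set I) (S T : Set I) :
    (ι × (Bool × Bool)) × (ι × (Bool × Bool)) → ℝ :=
  fun w => mVol (qcell (π w.1.1) S T w.1.2) * mVol (qcell (π w.2.1) S T w.2.2)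

def coreY (W : I → I → ℝ) {ι : Type} (π : ι → Set I) (S T : Set I) :
    (ι × (Bool × Bool)) × (ι × (Bool × Bool)) → ℝ :=
  fun w => cInt W (qcell (π w.1.1) S T w.1.2) (qcell (π w.2.1) S T w.2.2)
    - cAvg W (π w.1.1) (π w.2.1) * coreM π S T w

lemma coreM_nonneg {ι : Type} (π : ι → Set I) (S T : Set I) (w) :
    0 ≤ coreM π S T w := mul_nonneg (mVol_nonneg _) (mVol_nonneg _)

lemma coreY_zero {ι : Type} (π : ι → Set I) (S T : Set I) (w)
    (h : coreM π S T w = 0) : coreY W π S T w = 0 := by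
  unfold coreY
  rw [h, cInt_eq_zero_of_mzero W h, mul_zero, sub_zero]

set_option maxHeartbeats 1000000 in
lemma sum_coreM {ι : Type} [Fintype ι] {π : ι → Set I} (hπ : IsPart π)
    {S T : Set I} (hS : MeasurableSet S) (hT : MeasurableSet T) :
    ∑ w, coreM π S T w = 1 := by
  rw [Fintype.sum_prod_type]
  exact total_mass (refine_isPart hπ hS hT)

set_option maxHeartbeats 1000000 in
lemma sum_coreY_sq {ι : Type} [Fintype ι] (π : ι → Set I) (S T : Set I) :
    ∑ w, (coreY W π S T w) ^ 2 / coreM π S T w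
      = ∑ k, ∑ k', ∑ q : Bool × Bool, ∑ q' : Bool × Bool,
          (cInt W (qcell (π k) S T q) (qcell (π k') S T q')
            - cAvg W (π k) (π k')
              * (mVol (qcell (π k) S T q) * mVol (qcell (π k') S T q'))) ^ 2
            / (mVol (qcell (π k) S T q) * mVol (qcell (π k') S T q')) := by
  rw [Fintype.sum_prod_type]
  exact sum_prod_regroup
    (fun u v => (coreY W π S T (u, v)) ^ 2 / coreM π S T (u, v))

lemma bool_select (f : (Bool × Bool) → (Bool × Bool) → ℝ) :
    (∑ q : Bool × Bool, ∑ q' : Bool × Bool,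
        if q.1 = true ∧ q'.2 = true then f q q' else 0)
      = ∑ c : Bool, ∑ b' : Bool, f (true, c) (b', true) := by
  simp [Fintype.sum_prod_type, Fintype.sum_bool]

open Classical in
lemma core (hm : Measurable (Function.uncurry W))
    (hb : ∀ x y, W x y ∈ Set.Icc (0:ℝ) 1) {ι : Type} [Fintype ι]
    {π : ι → Set I} (hπ : IsPart π) {S T : Set I}
    (hS : MeasurableSet S) (hT : MeasurableSet T) :
    energy W π + (∫ p in S ×ˢ T, (W p.1 p.2 - stepF W π p.1 p.2)) ^ 2
      ≤ energy W (refine π S T) := by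
  classical
  rw [energy_refine hm hb hπ hS hT]
  have hΔ0 : 0 ≤ ∑ w, (coreY W π S T w) ^ 2 / coreM π S T w :=
    Finset.sum_nonneg fun w _ =>
      div_nonneg (sq_nonneg _) (coreM_nonneg π S T w)
  have key : (∫ p in S ×ˢ T, (W p.1 p.2 - stepF W π p.1 p.2)) ^ 2
      ≤ ∑ w, (coreY W π S T w) ^ 2 / coreM π S T w := by
    set F : (ι × (Bool × Bool)) × (ι × (Bool × Bool)) → ℝ :=
      fun w => coreY W π S T w / Real.sqrt (coreM π S T w) with hF
    set G : (ι × (Bool × Bool)) × (ι × (Bool × Bool)) → ℝ :=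
      fun w => if w.1.2.1 = true ∧ w.2.2.2 = true
        then Real.sqrt (coreM π S T w) else 0 with hG
    have hsumF2 : ∑ w, F w ^ 2 = ∑ w, (coreY W π S T w) ^ 2 / coreM π S T w := by
      refine Finset.sum_congr rfl fun w _ => ?_
      rw [hF]
      beta_reduce
      rw [div_pow, Real.sq_sqrt (coreM_nonneg π S T w)]
    have hsumG2 : ∑ w, G w ^ 2 ≤ 1 := by
      calc ∑ w, G w ^ 2 ≤ ∑ w, coreM π S T w := by
            refine Finset.sum_le_sum fun w _ => ?_
            rw [hG]
            beta_reduce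
            split
            · rw [Real.sq_sqrt (coreM_nonneg π S T w)]
            · simpa using coreM_nonneg π S T w
        _ = 1 := sum_coreM hπ hS hT
    have hFG : ∀ w, F w * G w
        = if w.1.2.1 = true ∧ w.2.2.2 = true then coreY W π S T w else 0 := by
      intro w
      rw [hF, hG]
      beta_reduce
      split
      · rcases eq_or_lt_of_le (coreM_nonneg π S T w) with h | h
        · rw [← h, coreY_zero π S T w h.symm]
          simp
        · rw [div_mul_cancel₀ _ (Real.sqrt_ne_zero'.2 h)]
      · rw [mul_zero]
    have hsumFG : ∑ w, F w * G w
        = ∫ p in S ×ˢ T, (W p.1 p.2 - stepF W π p.1 p.2) := by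
      rw [Finset.sum_congr rfl fun w _ => hFG w]
      rw [D_eq hm hb hπ hS hT]
      rw [Fintype.sum_prod_type]
      rw [sum_prod_regroup (fun u v =>
        if u.2.1 = true ∧ v.2.2 = true then coreY W π S T (u, v) else 0)]
      rw [sum_prod_regroup (fun (u : ι × Bool) (v : ι × Bool) =>
        cInt W (qcell (π u.1) S T (true, u.2)) (qcell (π v.1) S T (v.2, true))
          - cAvg W (π u.1) (π v.1)
            * (mVol (qcell (π u.1) S T (true, u.2))
                * mVol (qcell (π v.1) S T (v.2, true))))]
      refine Finset.sum_congr rfl fun k _ => Finset.sum_congr rfl fun k' _ => ?_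
      exact bool_select (fun q q' => coreY W π S T ((k, q), (k', q')))
    have hCS := Finset.sum_mul_sq_le_sq_mul_sq Finset.univ F G
    rw [hsumFG, hsumF2] at hCS
    calc (∫ p in S ×ˢ T, (W p.1 p.2 - stepF W π p.1 p.2)) ^ 2
        ≤ (∑ w, (coreY W π S T w) ^ 2 / coreM π S T w) * ∑ w, G w ^ 2 := hCS
      _ ≤ (∑ w, (coreY W π S T w) ^ 2 / coreM π S T w) * 1 :=
          mul_le_mul_of_nonneg_left hsumG2 hΔ0
      _ = ∑ w, (coreY W π S T w) ^ 2 / coreM π S T w := mul_one _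
  have hYs := sum_coreY_sq (W := W) π S T
  rw [hYs] at key
  linarith


/-! ### Cut norm bound for any partition, and the iteration -/

lemma claimA (hm : Measurable (Function.uncurry W))
    (hb : ∀ x y, W x y ∈ Set.Icc (0:ℝ) 1) {ι : Type} [Fintype ι]
    {π : ι → Set I} (hπ : IsPart π) :
    cutNorm (fun x y => W x y - stepF W π x y)
      ≤ Real.sqrt (∫ p : I × I, (W p.1 p.2) ^ 2) := by
  refine cutNorm_le fun S T hS hT => ?_
  have h1 := core hm hb hπ hS hT
  have h2 := energy_le hm hb (refine_isPart hπ hS hT)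
  have h3 := energy_nonneg (W := W) π
  have hsq : (∫ p in S ×ˢ T, (W p.1 p.2 - stepF W π p.1 p.2)) ^ 2
      ≤ ∫ p : I × I, (W p.1 p.2) ^ 2 := by linarith
  calc |∫ p in S ×ˢ T, W p.1 p.2 - stepF W π p.1 p.2|
      = Real.sqrt ((∫ p in S ×ˢ T, W p.1 p.2 - stepF W π p.1 p.2) ^ 2) :=
        (Real.sqrt_sq_eq_abs _).symm
    _ ≤ Real.sqrt (∫ p : I × I, (W p.1 p.2) ^ 2) := Real.sqrt_le_sqrt hsq

lemma iterate (hm : Measurable (Function.uncurry W))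
    (hb : ∀ x y, W x y ∈ Set.Icc (0:ℝ) 1) (ε : ℝ) (hε : 0 ≤ ε) (j : ℕ) :
    ∃ (ι : Type) (_ : Fintype ι) (π : ι → Set I), IsPart π ∧
      Fintype.card ι ≤ 4 ^ j ∧
      (cutNorm (fun x y => W x y - stepF W π x y) ≤ ε
        ∨ (j : ℝ) * ε ^ 2 ≤ energy W π) := by
  induction j with
  | zero =>
    refine ⟨PUnit, inferInstance, fun _ => Set.univ, ?_, ?_, Or.inr ?_⟩
    · exact ⟨fun _ => MeasurableSet.univ,
        fun a b h => absurd (Subsingleton.elim a b) h, Set.iUnion_const _⟩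
    · simp
    · simpa using energy_nonneg (W := W) (fun _ : PUnit => Set.univ)
  | succ j ih =>
    obtain ⟨ι, hfin, π, hπ, hcard, hor⟩ := ih
    by_cases hc : cutNorm (fun x y => W x y - stepF W π x y) ≤ ε
    · refine ⟨ι, hfin, π, hπ, ?_, Or.inl hc⟩
      calc Fintype.card ι ≤ 4 ^ j := hcard
        _ ≤ 4 ^ (j + 1) := Nat.pow_le_pow_right (by norm_num) (Nat.le_succ j)
    · have hen : (j : ℝ) * ε ^ 2 ≤ energy W π := hor.resolve_left hc
      push_neg at hc
      obtain ⟨S, T, hS, hT, hST⟩ := exists_gt_of_lt_cutNorm hc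
      refine ⟨ι × (Bool × Bool), inferInstance, refine π S T,
        refine_isPart hπ hS hT, ?_, Or.inr ?_⟩
      · calc Fintype.card (ι × (Bool × Bool)) = Fintype.card ι * 4 := by
              simp [Fintype.card_prod]
          _ ≤ 4 ^ j * 4 := Nat.mul_le_mul_right 4 hcard
          _ = 4 ^ (j + 1) := by rw [pow_succ]
      · have hD2 : ε ^ 2 ≤ (∫ p in S ×ˢ T, (W p.1 p.2 - stepF W π p.1 p.2)) ^ 2 := by
          have h1 : ε ≤ |∫ p in S ×ˢ T, (W p.1 p.2 - stepF W π p.1 p.2)| := le_of_lt hST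
          calc ε ^ 2 ≤ |∫ p in S ×ˢ T, (W p.1 p.2 - stepF W π p.1 p.2)| ^ 2 :=
                pow_le_pow_left₀ hε h1 2
            _ = (∫ p in S ×ˢ T, (W p.1 p.2 - stepF W π p.1 p.2)) ^ 2 := sq_abs _
        have hcore := core hm hb hπ hS hT
        have : ((j : ℝ) + 1) * ε ^ 2 = (j : ℝ) * ε ^ 2 + ε ^ 2 := by ring
        push_cast
        linarith

lemma main_cut (hm : Measurable (Function.uncurry W))
    (hb : ∀ x y, W x y ∈ Set.Icc (0:ℝ) 1) (K : ℕ) (hK : 2 ≤ K) :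
    ∃ (ι : Type) (_ : Fintype ι) (π : ι → Set I), IsPart π ∧
      Fintype.card ι ≤ K ∧
      cutNorm (fun x y => W x y - stepF W π x y)
        ≤ 2 / Real.sqrt (Real.log K)
            * Real.sqrt (∫ p : I × I, (W p.1 p.2) ^ 2) := by
  set Q : ℝ := ∫ p : I × I, (W p.1 p.2) ^ 2 with hQ
  set L : ℝ := Real.log K with hL
  have hL0 : 0 < L := Real.log_pos (by exact_mod_cast hK)
  have hsL : 0 < Real.sqrt L := Real.sqrt_pos.2 hL0
  have hQ0 : 0 ≤ Q := integral_nonneg fun p => sq_nonneg _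
  set l2 : ℝ := Real.sqrt Q with hl2
  have hl20 : 0 ≤ l2 := Real.sqrt_nonneg _
  set ε : ℝ := 2 / Real.sqrt L * l2 with hε
  have hε0 : 0 ≤ ε := mul_nonneg (div_nonneg (by norm_num) hsL.le) hl20
  have htriv : IsPart (fun _ : PUnit => (Set.univ : Set I)) :=
    ⟨fun _ => MeasurableSet.univ,
      fun a b h => absurd (Subsingleton.elim a b) h, Set.iUnion_const _⟩
  by_cases hcase : l2 ≤ ε
  · -- trivial partition suffices
    refine ⟨PUnit, inferInstance, fun _ => Set.univ, htriv, ?_, ?_⟩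
    · simpa using Nat.one_le_of_lt hK
    · calc cutNorm (fun x y => W x y - stepF W (fun _ : PUnit => Set.univ) x y)
          ≤ Real.sqrt Q := claimA hm hb htriv
        _ ≤ ε := hcase
  · push_neg at hcase
    have hl2pos : 0 < l2 := lt_of_le_of_lt hε0 hcase
    have hQpos : 0 < Q := by
      rcases eq_or_lt_of_le hQ0 with h | h
      · exfalso
        rw [hl2, ← h, Real.sqrt_zero] at hl2pos
        exact lt_irrefl 0 hl2pos
      · exact h
    have hfrac : 2 / Real.sqrt L < 1 := by
      nlinarith [hcase, hl2pos]
    have hsL2 : 2 < Real.sqrt L := by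
      rw [div_lt_one hsL] at hfrac
      exact hfrac
    have hL4 : 4 < L := by
      have hsq := Real.sq_sqrt hL0.le
      nlinarith [hsL2, hsq]
    have hε2 : ε ^ 2 = 4 / L * Q := by
      rw [hε, mul_pow, div_pow, Real.sq_sqrt hL0.le, hl2, Real.sq_sqrt hQ0]
      norm_num
    have hεpos : 0 < ε := by
      rw [hε]
      exact mul_pos (div_pos (by norm_num) hsL) hl2pos
    have hratio : Q / ε ^ 2 = L / 4 := by
      rw [hε2]
      field_simp
    set M : ℕ := Nat.floor (Q / ε ^ 2) + 1 with hM
    have hMup : (M : ℝ) ≤ L / 4 + 1 := by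
      have h1 : (⌊Q / ε ^ 2⌋₊ : ℝ) ≤ Q / ε ^ 2 := Nat.floor_le (by positivity)
      rw [hM]
      push_cast
      rw [← hratio]
      linarith
    have hMlow : Q / ε ^ 2 < (M : ℝ) := by
      rw [hM]
      push_cast
      exact Nat.lt_floor_add_one _
    have hlog4 : Real.log 4 < 2 := by
      rw [Real.log_lt_iff_lt_exp (by norm_num)]
      have h1 : Real.exp 2 = Real.exp 1 * Real.exp 1 := by
        rw [← Real.exp_add]; norm_num
      have h2 := Real.exp_one_gt_d9
      nlinarith
    have hlog4pos : 0 < Real.log 4 := Real.log_pos (by norm_num)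
    have hpowK : (4:ℝ) ^ M ≤ (K:ℝ) := by
      have hMlog : (M:ℝ) * Real.log 4 ≤ L := by
        have hM0 : (0:ℝ) ≤ (M:ℝ) := Nat.cast_nonneg M
        nlinarith [hMup, hlog4, hlog4pos, hL4, hM0]
      have h1 : Real.log ((4:ℝ) ^ M) ≤ Real.log K := by
        rw [Real.log_pow]
        exact_mod_cast hMlog
      have h2 : (0:ℝ) < (4:ℝ) ^ M := by positivity
      exact (Real.log_le_log_iff h2 (by positivity)).1 h1
    have hpowKn : 4 ^ M ≤ K := by
      have : ((4 ^ M : ℕ) : ℝ) ≤ (K : ℝ) := by push_cast; exact hpowK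
      exact_mod_cast this
    obtain ⟨ι, hfin, π, hπ, hcard, hor⟩ := iterate hm hb ε hε0 M
    refine ⟨ι, hfin, π, hπ, le_trans hcard hpowKn, ?_⟩
    rcases hor with h | h
    · exact h
    · exfalso
      have hQM : Q < (M : ℝ) * ε ^ 2 := by
        have := (div_lt_iff₀ (by positivity : (0:ℝ) < ε ^ 2)).1 hMlow
        linarith
      have hle := energy_le hm hb hπ
      rw [← hQ] at hle
      linarith


/-! ### Padding a partition to exactly K parts -/

def padSet {ι : Type} [Fintype ι] (π : ι → Set I) (K : ℕ) : Fin K → Set I :=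
  fun j => if h : (j : ℕ) < Fintype.card ι
    then π ((Fintype.equivFin ι).symm ⟨(j : ℕ), h⟩) else ∅

lemma padSet_meas {ι : Type} [Fintype ι] {π : ι → Set I}
    (hm : ∀ k, MeasurableSet (π k)) (K : ℕ) (j : Fin K) :
    MeasurableSet (padSet π K j) := by
  unfold padSet
  split
  · exact hm _
  · exact MeasurableSet.empty

lemma padSet_disj {ι : Type} [Fintype ι] {π : ι → Set I}
    (hd : Pairwise (Function.onFun Disjoint π)) (K : ℕ) :
    Pairwise (Function.onFun Disjoint (padSet π K)) := by
  intro j j' hne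
  unfold Function.onFun padSet
  split
  case isTrue h =>
    split
    case isTrue h' =>
      refine hd fun heq => hne ?_
      have h2 : (⟨(j : ℕ), h⟩ : Fin (Fintype.card ι)) = ⟨(j' : ℕ), h'⟩ :=
        (Fintype.equivFin ι).symm.injective heq
      have h3 : (j : ℕ) = (j' : ℕ) := by injection h2
      exact Fin.ext h3
    case isFalse h' => exact Set.disjoint_empty _
  case isFalse h => exact Set.empty_disjoint _

lemma padSet_cover {ι : Type} [Fintype ι] {π : ι → Set I}
    (hcov : ⋃ k, π k = Set.univ) {K : ℕ} (hK : Fintype.card ι ≤ K) :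
    ⋃ j, padSet π K j = Set.univ := by
  rw [Set.eq_univ_iff_forall]
  intro z
  have hz : z ∈ ⋃ k, π k := by rw [hcov]; trivial
  obtain ⟨k, hk⟩ := Set.mem_iUnion.1 hz
  set e := Fintype.equivFin ι with he
  have hlt : ((e k : ℕ)) < Fintype.card ι := (e k).isLt
  refine Set.mem_iUnion.2 ⟨⟨(e k : ℕ), lt_of_lt_of_le hlt hK⟩, ?_⟩
  show z ∈ padSet π K _
  unfold padSet
  rw [dif_pos hlt]
  have h2 : (⟨((e k : ℕ)), hlt⟩ : Fin (Fintype.card ι)) = e k := rfl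
  rw [h2, ← he, Equiv.symm_apply_apply]
  exact hk

lemma sum_pad {ι : Type} [Fintype ι] {π : ι → Set I} {K : ℕ}
    (hK : Fintype.card ι ≤ K) (H : Set I → ℝ) (h0 : H ∅ = 0) :
    ∑ j : Fin K, H (padSet π K j) = ∑ k : ι, H (π k) := by
  have h1 : ∀ j : Fin K, H (padSet π K j)
      = if h : (j : ℕ) < Fintype.card ι
          then H (π ((Fintype.equivFin ι).symm ⟨(j : ℕ), h⟩)) else 0 := by
    intro j
    unfold padSet
    split
    · rfl
    · exact h0
  rw [Finset.sum_congr rfl fun j _ => h1 j]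
  rw [Fin.sum_univ_eq_sum_range
    (fun i => if h : i < Fintype.card ι
      then H (π ((Fintype.equivFin ι).symm ⟨i, h⟩)) else 0) K]
  rw [← Finset.sum_subset (Finset.range_subset_range.2 hK) (by
    intro i _ hni
    rw [Finset.mem_range] at hni
    exact dif_neg hni)]
  rw [← Fin.sum_univ_eq_sum_range
    (fun i => if h : i < Fintype.card ι
      then H (π ((Fintype.equivFin ι).symm ⟨i, h⟩)) else 0) (Fintype.card ι)]
  have h2 : ∀ i : Fin (Fintype.card ι),
      (if h : (i : ℕ) < Fintype.card ι
        then H (π ((Fintype.equivFin ι).symm ⟨(i : ℕ), h⟩)) else 0)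
        = H (π ((Fintype.equivFin ι).symm i)) := by
    intro i
    rw [dif_pos i.isLt]
  rw [Finset.sum_congr rfl fun i _ => h2 i]
  exact Equiv.sum_comp (Fintype.equivFin ι).symm fun k => H (π k)

set_option maxHeartbeats 2000000 in
open Classical in
lemma stepFun_pad {ι : Type} [Fintype ι] {π : ι → Set I}
    {K : ℕ} (hK : Fintype.card ι ≤ K) (x y : I) :
    stepFun (padSet π K) (fun j j' => cAvg W (padSet π K j) (padSet π K j')) x y
      = stepF W π x y := by
  unfold stepFun stepF
  have h := sum_pad (π := π) hK
    (fun A => ∑ j' : Fin K,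
      if x ∈ A ∧ y ∈ padSet π K j' then cAvg W A (padSet π K j') else 0)
    (by simp)
  beta_reduce at h
  rw [h]
  refine Finset.sum_congr rfl fun k _ => ?_
  have hk := sum_pad (π := π) hK
    (fun B => if x ∈ π k ∧ y ∈ B then cAvg W (π k) B else 0)
    (by simp)
  beta_reduce at hk
  exact hk

/-! ### cutDist bound via the identity map -/

lemma cutDist_le_cutNorm_self (W₁ W₂ : I → I → ℝ)
    (hbdd : ∀ φ : I → I, MeasurePreserving φ volume volume →
      Integrable (fun p : I × I => W₁ p.1 p.2 - W₂ (φ p.1) (φ p.2))) :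
    cutDist W₁ W₂ ≤ cutNorm (fun x y => W₁ x y - W₂ x y) := by
  refine csInf_le ⟨0, ?_⟩ ⟨id, MeasurePreserving.id volume, rfl⟩
  rintro r ⟨φ, hφ, rfl⟩
  exact cutNorm_nonneg (hbdd φ hφ)

set_option maxHeartbeats 2000000 in
open Classical in
lemma integrable_diff_stepFun (hm : Measurable (Function.uncurry W))
    (hb : ∀ x y, W x y ∈ Set.Icc (0:ℝ) 1) {K : ℕ} {P : Fin K → Set I}
    (hP : ∀ j, MeasurableSet (P j)) {w : Fin K → Fin K → ℝ}
    (hw : ∀ j j', w j j' ∈ Set.Icc (0:ℝ) 1)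
    (φ : I → I) (hφ : MeasurePreserving φ volume volume) :
    Integrable (fun p : I × I => W p.1 p.2 - stepFun P w (φ p.1) (φ p.2)) := by
  have hrw : ∀ a b : I, stepFun P w a b
      = ∑ k, ∑ k', if a ∈ P k ∧ b ∈ P k' then w k k' else 0 := fun a b => rfl
  simp only [hrw]
  refine (integrable_W hm hb).sub (integrable_of_bounded' ?_ ((K:ℝ) * (K:ℝ)) ?_)
  · have h1 : Measurable (fun p : I × I =>
        (∑ k, ∑ k', if p.1 ∈ P k ∧ p.2 ∈ P k' then w k k' else 0 : ℝ)) :=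
      measurable_stepF hP w
    have h2 : Measurable (fun p : I × I => (φ p.1, φ p.2)) :=
      (hφ.measurable.comp measurable_fst).prodMk (hφ.measurable.comp measurable_snd)
    exact h1.comp h2
  · intro p
    calc |∑ k, ∑ k', if φ p.1 ∈ P k ∧ φ p.2 ∈ P k' then w k k' else (0:ℝ)|
        ≤ ∑ k, ∑ k', |if φ p.1 ∈ P k ∧ φ p.2 ∈ P k' then w k k' else 0| := by
          refine (Finset.abs_sum_le_sum_abs _ _).trans ?_
          exact Finset.sum_le_sum fun k _ => Finset.abs_sum_le_sum_abs _ _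
      _ ≤ ∑ _k : Fin K, ∑ _k' : Fin K, (1:ℝ) := by
          refine Finset.sum_le_sum fun k _ => Finset.sum_le_sum fun k' _ => ?_
          split
          · rw [abs_of_nonneg (hw k k').1]
            exact (hw k k').2
          · simp
      _ = (K:ℝ) * (K:ℝ) := by simp [Finset.card_univ, mul_comm]

end WR

/-- Weak Regularity Lemma (cut-distance form). -/
theorem weak_regularity_cutDist (W : I → I → ℝ) (hW : IsGraphon W)
    (K : ℕ) (hK : 2 ≤ K) :
    ∃ (P : Fin K → Set I) (w : Fin K → Fin K → ℝ),
      (∀ k, MeasurableSet (P k)) ∧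
      Pairwise (Function.onFun Disjoint P) ∧
      (⋃ k, P k) = Set.univ ∧
      (∀ k k', w k k' ∈ Set.Icc (0 : ℝ) 1) ∧
      (∀ k k', w k k' = w k' k) ∧
      cutDist W (stepFun P w) ≤ 2 / Real.sqrt (Real.log K) * l2Norm W := by
  classical
  obtain ⟨hm, hsym, hb⟩ := hW
  obtain ⟨ι, hfin, π, hπ, hcard, hcut⟩ := WR.main_cut hm hb K hK
  refine ⟨WR.padSet π K,
    fun j j' => WR.cAvg W (WR.padSet π K j) (WR.padSet π K j'),
    fun j => WR.padSet_meas hπ.meas K j, WR.padSet_disj hπ.disj K,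
    WR.padSet_cover hπ.cover hcard,
    fun j j' => WR.cAvg_mem hm hb (WR.padSet_meas hπ.meas K j)
      (WR.padSet_meas hπ.meas K j'),
    fun j j' => WR.cAvg_symm hsym _ _, ?_⟩
  have heq : (fun x y => W x y - stepFun (WR.padSet π K)
      (fun j j' => WR.cAvg W (WR.padSet π K j) (WR.padSet π K j')) x y)
      = (fun x y => W x y - WR.stepF W π x y) := by
    funext x y
    rw [WR.stepFun_pad hcard x y]
  calc cutDist W (stepFun (WR.padSet π K)
        (fun j j' => WR.cAvg W (WR.padSet π K j) (WR.padSet π K j')))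
      ≤ cutNorm (fun x y => W x y - stepFun (WR.padSet π K)
          (fun j j' => WR.cAvg W (WR.padSet π K j) (WR.padSet π K j')) x y) :=
        WR.cutDist_le_cutNorm_self _ _ (fun φ hφ =>
          WR.integrable_diff_stepFun hm hb
            (fun j => WR.padSet_meas hπ.meas K j)
            (fun j j' => WR.cAvg_mem hm hb (WR.padSet_meas hπ.meas K j)
              (WR.padSet_meas hπ.meas K j')) φ hφ)
    _ = cutNorm (fun x y => W x y - WR.stepF W π x y) := by rw [heq]
    _ ≤ 2 / Real.sqrt (Real.log K) * l2Norm W := hcut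

end
end

section
/- Let P = (P₁, …, P_I) and Q = (Q₁, …, Q_J) be partitions of [0,1] into Lebesgue-measurable sets, with μ_i = λ(P_i) and ν_j = λ(Q_j), and let W₁ and W₂ be step functions with symmetric value matrices (w_{1,ij}) ∈ [0,1]^{I×I} on P and (w_{2,i'j'}) ∈ [0,1]^{J×J} on Q respectively. Then the infimum over all probability measures π on [0,1] × [0,1] whose two marginals are both the Lebesgue measure of ∫∫ |W₁(x,y) − W₂(x',y')| dπ(x,x') dπ(y,y') equals the minimum over coupling matrices T ∈ Π(μ, ν) of Σ_{i,j,i',j'} |w_{1,ij} − w_{2,i'j'}| T_{ii'} T_{jj'}, and this minimum is attained. -/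
open MeasureTheory unitInterval

noncomputable section

lemma part_unique {K : ℕ} {P : Fin K → Set I}
    (hdisj : Pairwise (Function.onFun Disjoint P))
    {x : I} {i j : Fin K} (hi : x ∈ P i) (hj : x ∈ P j) : i = j := by
  by_contra h
  exact Set.disjoint_left.mp (hdisj h) hi hj

lemma stepFun_apply' {K : ℕ} {P : Fin K → Set I}
    (hdisj : Pairwise (Function.onFun Disjoint P)) (w : Fin K → Fin K → ℝ)
    {x y : I} {i j : Fin K} (hx : x ∈ P i) (hy : y ∈ P j) :
    stepFun P w x y = w i j := by
  classical
  unfold stepFun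
  have h : ∀ k k' : Fin K, (if x ∈ P k ∧ y ∈ P k' then w k k' else 0)
      = if k = i ∧ k' = j then w k k' else 0 := by
    intro k k'
    by_cases h : x ∈ P k ∧ y ∈ P k'
    · rw [if_pos h, if_pos ⟨part_unique hdisj h.1 hx, part_unique hdisj h.2 hy⟩]
    · rw [if_neg h, if_neg]
      rintro ⟨rfl, rfl⟩
      exact h ⟨hx, hy⟩
  simp only [h, ite_and]
  simp

lemma meas_partition {K : ℕ} (μ : Measure I) {P : Fin K → Set I}
    (hmeas : ∀ i, MeasurableSet (P i))
    (hdisj : Pairwise (Function.onFun Disjoint P))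
    (hcover : (⋃ i, P i) = Set.univ)
    {s : Set I} (hs : MeasurableSet s) :
    ∑ i, μ (s ∩ P i) = μ s := by
  have hd : Pairwise (Function.onFun Disjoint fun i => s ∩ P i) :=
    fun i j h => (hdisj h).mono Set.inter_subset_right Set.inter_subset_right
  calc ∑ i, μ (s ∩ P i) = ∑' i, μ (s ∩ P i) := (tsum_fintype _).symm
    _ = μ (⋃ i, s ∩ P i) := (measure_iUnion hd fun i => hs.inter (hmeas i)).symm
    _ = μ s := by rw [← Set.inter_iUnion, hcover, Set.inter_univ]

lemma real_key {n m : ℕ} (c : Fin n → Fin m → ℝ) (μ : Fin n → ℝ) (ν : Fin m → ℝ)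
    (a : Fin n → ℝ)
    (hrow : ∀ i, ∑ j, c i j = μ i)
    (hν0 : ∀ i j, ν j = 0 → c i j = 0)
    (ha0 : ∀ i, μ i = 0 → a i = 0) :
    ∑ i, ∑ j, c i j / (μ i * ν j) * (a i * ν j) = ∑ i, a i := by
  refine Finset.sum_congr rfl fun i _ => ?_
  by_cases hμ : μ i = 0
  · simp [ha0 i hμ, hμ]
  · have hterm : ∀ j, c i j / (μ i * ν j) * (a i * ν j) = c i j * (a i / μ i) := by
      intro j
      by_cases hν : ν j = 0
      · simp [hν, hν0 i j hν]
      · field_simp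
    rw [Finset.sum_congr rfl fun j _ => hterm j, ← Finset.sum_mul, hrow i]
    field_simp

lemma coupling_row {nI nJ : ℕ} (P : Fin nI → Set I) (Q : Fin nJ → Set I)
    (hPmeas : ∀ i, MeasurableSet (P i))
    (hQmeas : ∀ j, MeasurableSet (Q j))
    (hQdisj : Pairwise (Function.onFun Disjoint Q))
    (hQcover : (⋃ j, Q j) = Set.univ)
    (π : Measure (I × I)) [IsFiniteMeasure π]
    (h1 : π.map Prod.fst = volume) (i : Fin nI) :
    ∑ j, (π (P i ×ˢ Q j)).toReal = (volume (P i)).toReal := by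
  rw [← ENNReal.toReal_sum (fun j _ => measure_ne_top _ _)]
  congr 1
  have hd : Pairwise (Function.onFun Disjoint fun j => P i ×ˢ Q j) := by
    intro j j' h
    refine Set.disjoint_left.mpr ?_
    rintro ⟨a, b⟩ ⟨-, hb⟩ ⟨-, hb'⟩
    exact Set.disjoint_left.mp (hQdisj h) hb hb'
  calc ∑ j, π (P i ×ˢ Q j) = ∑' j, π (P i ×ˢ Q j) := (tsum_fintype _).symm
    _ = π (⋃ j, P i ×ˢ Q j) := (measure_iUnion hd fun j => (hPmeas i).prod (hQmeas j)).symm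
    _ = π (Prod.fst ⁻¹' P i) := by rw [← Set.prod_iUnion, hQcover, Set.prod_univ]
    _ = volume (P i) := by rw [← Measure.map_apply measurable_fst (hPmeas i), h1]

lemma coupling_col {nI nJ : ℕ} (P : Fin nI → Set I) (Q : Fin nJ → Set I)
    (hPmeas : ∀ i, MeasurableSet (P i))
    (hPdisj : Pairwise (Function.onFun Disjoint P))
    (hPcover : (⋃ i, P i) = Set.univ)
    (hQmeas : ∀ j, MeasurableSet (Q j))
    (π : Measure (I × I)) [IsFiniteMeasure π]
    (h2 : π.map Prod.snd = volume) (j : Fin nJ) :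
    ∑ i, (π (P i ×ˢ Q j)).toReal = (volume (Q j)).toReal := by
  rw [← ENNReal.toReal_sum (fun i _ => measure_ne_top _ _)]
  congr 1
  have hd : Pairwise (Function.onFun Disjoint fun i => P i ×ˢ Q j) := by
    intro i i' h
    refine Set.disjoint_left.mpr ?_
    rintro ⟨a, b⟩ ⟨ha, -⟩ ⟨ha', -⟩
    exact Set.disjoint_left.mp (hPdisj h) ha ha'
  calc ∑ i, π (P i ×ˢ Q j) = ∑' i, π (P i ×ˢ Q j) := (tsum_fintype _).symm
    _ = π (⋃ i, P i ×ˢ Q j) := (measure_iUnion hd fun i => (hPmeas i).prod (hQmeas j)).symm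
    _ = π (Prod.snd ⁻¹' Q j) := by rw [← Set.iUnion_prod_const, hPcover, Set.univ_prod]
    _ = volume (Q j) := by rw [← Measure.map_apply measurable_snd (hQmeas j), h2]

lemma pointwise_decomp {nI nJ : ℕ} (P : Fin nI → Set I) (Q : Fin nJ → Set I)
    (hPdisj : Pairwise (Function.onFun Disjoint P))
    (hPcover : (⋃ i, P i) = Set.univ)
    (hQdisj : Pairwise (Function.onFun Disjoint Q))
    (hQcover : (⋃ j, Q j) = Set.univ)
    (w₁ : Fin nI → Fin nI → ℝ) (w₂ : Fin nJ → Fin nJ → ℝ)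
    (q : (I × I) × (I × I)) :
    |stepFun P w₁ q.1.1 q.2.1 - stepFun Q w₂ q.1.2 q.2.2| =
      ∑ i, ∑ j, ∑ i', ∑ j',
        ((P i ×ˢ Q i') ×ˢ (P j ×ˢ Q j')).indicator
          (fun _ => |w₁ i j - w₂ i' j'|) q := by
  classical
  have hex : ∀ x : I, ∃ i, x ∈ P i := fun x => Set.mem_iUnion.mp (hPcover ▸ Set.mem_univ x)
  have hex' : ∀ x : I, ∃ j, x ∈ Q j := fun x => Set.mem_iUnion.mp (hQcover ▸ Set.mem_univ x)
  obtain ⟨i₀, hi₀⟩ := hex q.1.1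
  obtain ⟨j₀, hj₀⟩ := hex q.2.1
  obtain ⟨i₁, hi₁⟩ := hex' q.1.2
  obtain ⟨j₁, hj₁⟩ := hex' q.2.2
  rw [stepFun_apply' hPdisj w₁ hi₀ hj₀, stepFun_apply' hQdisj w₂ hi₁ hj₁]
  have hind : ∀ (i j : Fin nI) (i' j' : Fin nJ),
      ((P i ×ˢ Q i') ×ˢ (P j ×ˢ Q j')).indicator (fun _ => |w₁ i j - w₂ i' j'|) q
        = if i = i₀ ∧ j = j₀ ∧ i' = i₁ ∧ j' = j₁ then |w₁ i j - w₂ i' j'| else 0 := by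
    intro i j i' j'
    rw [Set.indicator_apply]
    by_cases h : q ∈ (P i ×ˢ Q i') ×ˢ (P j ×ˢ Q j')
    · obtain ⟨⟨h1, h2⟩, h3, h4⟩ := id h
      rw [if_pos h, if_pos ⟨part_unique hPdisj h1 hi₀, part_unique hPdisj h3 hj₀,
        part_unique hQdisj h2 hi₁, part_unique hQdisj h4 hj₁⟩]
    · rw [if_neg h, if_neg]
      rintro ⟨rfl, rfl, rfl, rfl⟩
      exact h ⟨⟨hi₀, hi₁⟩, hj₀, hj₁⟩
  simp only [hind, ite_and]
  simp

lemma integral_step_coupling {nI nJ : ℕ} (P : Fin nI → Set I) (Q : Fin nJ → Set I)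
    (hPmeas : ∀ i, MeasurableSet (P i))
    (hPdisj : Pairwise (Function.onFun Disjoint P))
    (hPcover : (⋃ i, P i) = Set.univ)
    (hQmeas : ∀ j, MeasurableSet (Q j))
    (hQdisj : Pairwise (Function.onFun Disjoint Q))
    (hQcover : (⋃ j, Q j) = Set.univ)
    (w₁ : Fin nI → Fin nI → ℝ) (w₂ : Fin nJ → Fin nJ → ℝ)
    (π : Measure (I × I)) [IsProbabilityMeasure π] :
    ∫ q : (I × I) × (I × I), |stepFun P w₁ q.1.1 q.2.1 - stepFun Q w₂ q.1.2 q.2.2| ∂(π.prod π)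
      = ∑ i, ∑ j, ∑ i', ∑ j', |w₁ i j - w₂ i' j'| *
          ((π (P i ×ˢ Q i')).toReal * (π (P j ×ˢ Q j')).toReal) := by
  have hmeas : ∀ (i j : Fin nI) (i' j' : Fin nJ),
      MeasurableSet ((P i ×ˢ Q i') ×ˢ (P j ×ˢ Q j')) :=
    fun i j i' j' => ((hPmeas i).prod (hQmeas i')).prod ((hPmeas j).prod (hQmeas j'))
  have hint : ∀ (i j : Fin nI) (i' j' : Fin nJ),
      Integrable (fun q => (((P i ×ˢ Q i') ×ˢ (P j ×ˢ Q j')).indicator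
        (fun _ => |w₁ i j - w₂ i' j'|)) q) (π.prod π) :=
    fun i j i' j' => (integrable_const _).indicator (hmeas i j i' j')
  rw [show (fun q : (I × I) × (I × I) => |stepFun P w₁ q.1.1 q.2.1 - stepFun Q w₂ q.1.2 q.2.2|)
      = fun q => ∑ i, ∑ j, ∑ i', ∑ j', (((P i ×ˢ Q i') ×ˢ (P j ×ˢ Q j')).indicator
          (fun _ => |w₁ i j - w₂ i' j'|)) q
    from funext fun q => pointwise_decomp P Q hPdisj hPcover hQdisj hQcover w₁ w₂ q]
  rw [integral_finset_sum _ (fun i _ => integrable_finset_sum _ fun j _ =>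
    integrable_finset_sum _ fun i' _ => integrable_finset_sum _ fun j' _ => hint i j i' j')]
  refine Finset.sum_congr rfl fun i _ => ?_
  rw [integral_finset_sum _ (fun j _ => integrable_finset_sum _ fun i' _ =>
    integrable_finset_sum _ fun j' _ => hint i j i' j')]
  refine Finset.sum_congr rfl fun j _ => ?_
  rw [integral_finset_sum _ (fun i' _ => integrable_finset_sum _ fun j' _ => hint i j i' j')]
  refine Finset.sum_congr rfl fun i' _ => ?_
  rw [integral_finset_sum _ (fun j' _ => hint i j i' j')]
  refine Finset.sum_congr rfl fun j' _ => ?_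
  rw [integral_indicator_const _ (hmeas i j i' j'), measureReal_def, Measure.prod_prod, ENNReal.toReal_mul,
    smul_eq_mul]
  ring

set_option maxHeartbeats 1000000 in
/-- for step functions, the infimum over measure couplings of the
δ₁-type double integral is attained by a coupling matrix and equals the matrix
minimum. -/
theorem delta1_stepFun_eq_matrix_min (nI nJ : ℕ)
    (P : Fin nI → Set I) (Q : Fin nJ → Set I)
    (hPmeas : ∀ i, MeasurableSet (P i))
    (hPdisj : Pairwise (Function.onFun Disjoint P))
    (hPcover : (⋃ i, P i) = Set.univ)
    (hQmeas : ∀ j, MeasurableSet (Q j))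
    (hQdisj : Pairwise (Function.onFun Disjoint Q))
    (hQcover : (⋃ j, Q j) = Set.univ)
    (w₁ : Fin nI → Fin nI → ℝ) (w₂ : Fin nJ → Fin nJ → ℝ)
    (hw₁ : ∀ i j, w₁ i j ∈ Set.Icc (0 : ℝ) 1) (hw₁s : ∀ i j, w₁ i j = w₁ j i)
    (hw₂ : ∀ i j, w₂ i j ∈ Set.Icc (0 : ℝ) 1) (hw₂s : ∀ i j, w₂ i j = w₂ j i) :
    ∃ T : Fin nI → Fin nJ → ℝ,
      ((∀ i j, 0 ≤ T i j) ∧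
       (∀ i, ∑ j, T i j = (volume (P i)).toReal) ∧
       (∀ j, ∑ i, T i j = (volume (Q j)).toReal)) ∧
      (∑ i, ∑ j, ∑ i', ∑ j', |w₁ i j - w₂ i' j'| * (T i i' * T j j')) =
        sInf { r : ℝ | ∃ π : Measure (I × I), IsProbabilityMeasure π ∧
          π.map Prod.fst = volume ∧ π.map Prod.snd = volume ∧
          r = ∫ q : (I × I) × (I × I),
            |stepFun P w₁ q.1.1 q.2.1 - stepFun Q w₂ q.1.2 q.2.2| ∂(π.prod π) } ∧
      ∀ T' : Fin nI → Fin nJ → ℝ,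
        ((∀ i j, 0 ≤ T' i j) ∧
         (∀ i, ∑ j, T' i j = (volume (P i)).toReal) ∧
         (∀ j, ∑ i, T' i j = (volume (Q j)).toReal)) →
        (∑ i, ∑ j, ∑ i', ∑ j', |w₁ i j - w₂ i' j'| * (T i i' * T j j')) ≤
          ∑ i, ∑ j, ∑ i', ∑ j', |w₁ i j - w₂ i' j'| * (T' i i' * T' j j') := by
  classical
  set F : (Fin nI → Fin nJ → ℝ) → ℝ :=
    fun T => ∑ i, ∑ j, ∑ i', ∑ j', |w₁ i j - w₂ i' j'| * (T i i' * T j j') with hF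
  set Cpl : Set (Fin nI → Fin nJ → ℝ) :=
    {T | (∀ i j, 0 ≤ T i j) ∧ (∀ i, ∑ j, T i j = (volume (P i)).toReal) ∧
      (∀ j, ∑ i, T i j = (volume (Q j)).toReal)} with hCplDef
  -- Part B : building a coupling measure from a coupling matrix
  have hBuild : ∀ T ∈ Cpl, ∃ π : Measure (I × I), IsProbabilityMeasure π ∧
      π.map Prod.fst = volume ∧ π.map Prod.snd = volume ∧
      ∀ i j, π (P i ×ˢ Q j) = ENNReal.ofReal (T i j) := by
    rintro T ⟨hT0, hTrow, hTcol⟩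
    set π : Measure (I × I) := ∑ i, ∑ j,
      ENNReal.ofReal (T i j / ((volume (P i)).toReal * (volume (Q j)).toReal)) •
        ((volume.restrict (P i)).prod (volume.restrict (Q j))) with hπdef
    have c_nonneg : ∀ i j, 0 ≤ T i j / ((volume (P i)).toReal * (volume (Q j)).toReal) :=
      fun i j => div_nonneg (hT0 i j) (mul_nonneg ENNReal.toReal_nonneg ENNReal.toReal_nonneg)
    have hTle_row : ∀ i j, T i j ≤ (volume (P i)).toReal := fun i j => by
      rw [← hTrow i]; exact Finset.single_le_sum (fun k _ => hT0 i k) (Finset.mem_univ j)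
    have hTle_col : ∀ i j, T i j ≤ (volume (Q j)).toReal := fun i j => by
      rw [← hTcol j]; exact Finset.single_le_sum (fun k _ => hT0 k j) (Finset.mem_univ i)
    have hTμ0 : ∀ i j, (volume (P i)).toReal = 0 → T i j = 0 :=
      fun i j h => le_antisymm (h ▸ hTle_row i j) (hT0 i j)
    have hTν0 : ∀ i j, (volume (Q j)).toReal = 0 → T i j = 0 :=
      fun i j h => le_antisymm (h ▸ hTle_col i j) (hT0 i j)
    have hval : ∀ {s t : Set I}, MeasurableSet s → MeasurableSet t →
        π (s ×ˢ t) = ∑ i, ∑ j,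
          ENNReal.ofReal (T i j / ((volume (P i)).toReal * (volume (Q j)).toReal)) *
            (volume (s ∩ P i) * volume (t ∩ Q j)) := by
      intro s t hs ht
      rw [hπdef]
      simp only [Measure.coe_finset_sum, Finset.sum_apply, Measure.smul_apply,
        Measure.prod_prod, Measure.restrict_apply hs, Measure.restrict_apply ht, smul_eq_mul]
    have hne : ∀ {s t : Set I}, MeasurableSet s → MeasurableSet t → π (s ×ˢ t) ≠ ⊤ := by
      intro s t hs ht
      rw [hval hs ht]
      refine (ENNReal.sum_lt_top.mpr fun i _ => ENNReal.sum_lt_top.mpr fun j _ => ?_).ne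
      exact ENNReal.mul_lt_top ENNReal.ofReal_lt_top
        (ENNReal.mul_lt_top (measure_lt_top _ _) (measure_lt_top _ _))
    have htoReal : ∀ {s t : Set I}, MeasurableSet s → MeasurableSet t →
        (π (s ×ˢ t)).toReal = ∑ i, ∑ j,
          T i j / ((volume (P i)).toReal * (volume (Q j)).toReal) *
            ((volume (s ∩ P i)).toReal * (volume (t ∩ Q j)).toReal) := by
      intro s t hs ht
      rw [hval hs ht, ENNReal.toReal_sum (fun i _ => (ENNReal.sum_lt_top.mpr fun j _ =>
        ENNReal.mul_lt_top ENNReal.ofReal_lt_top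
          (ENNReal.mul_lt_top (measure_lt_top _ _) (measure_lt_top _ _))).ne)]
      refine Finset.sum_congr rfl fun i _ => ?_
      rw [ENNReal.toReal_sum (fun j _ => (ENNReal.mul_lt_top ENNReal.ofReal_lt_top
        (ENNReal.mul_lt_top (measure_lt_top _ _) (measure_lt_top _ _))).ne)]
      refine Finset.sum_congr rfl fun j _ => ?_
      rw [ENNReal.toReal_mul, ENNReal.toReal_ofReal (c_nonneg i j), ENNReal.toReal_mul]
    have hzeroP : ∀ (i : Fin nI) {s : Set I}, (volume (P i)).toReal = 0 →
        (volume (s ∩ P i)).toReal = 0 := by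
      intro i s h
      have h0 : volume (P i) = 0 := by
        rcases (ENNReal.toReal_eq_zero_iff _).mp h with h' | h'
        · exact h'
        · exact absurd h' (measure_ne_top _ _)
      have : volume (s ∩ P i) = 0 :=
        le_antisymm (h0 ▸ measure_mono Set.inter_subset_right) zero_le
      rw [this, ENNReal.toReal_zero]
    have hzeroQ : ∀ (j : Fin nJ) {t : Set I}, (volume (Q j)).toReal = 0 →
        (volume (t ∩ Q j)).toReal = 0 := by
      intro j t h
      have h0 : volume (Q j) = 0 := by
        rcases (ENNReal.toReal_eq_zero_iff _).mp h with h' | h'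
        · exact h'
        · exact absurd h' (measure_ne_top _ _)
      have : volume (t ∩ Q j) = 0 :=
        le_antisymm (h0 ▸ measure_mono Set.inter_subset_right) zero_le
      rw [this, ENNReal.toReal_zero]
    have hfst_val : ∀ {s : Set I}, MeasurableSet s → π (s ×ˢ Set.univ) = volume s := by
      intro s hs
      refine (ENNReal.toReal_eq_toReal_iff' (hne hs MeasurableSet.univ) (measure_ne_top _ _)).mp ?_
      rw [htoReal hs MeasurableSet.univ]
      simp only [Set.univ_inter]
      calc (∑ i, ∑ j, T i j / ((volume (P i)).toReal * (volume (Q j)).toReal) *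
              ((volume (s ∩ P i)).toReal * (volume (Q j)).toReal))
          = ∑ i, (volume (s ∩ P i)).toReal :=
            real_key T (fun i => (volume (P i)).toReal) (fun j => (volume (Q j)).toReal)
              (fun i => (volume (s ∩ P i)).toReal) hTrow (fun i j h => hTν0 i j h)
              (fun i h => hzeroP i h)
        _ = (volume s).toReal := by
            rw [← ENNReal.toReal_sum (fun i _ => measure_ne_top _ _),
              meas_partition volume hPmeas hPdisj hPcover hs]
    have hsnd_val : ∀ {t : Set I}, MeasurableSet t → π (Set.univ ×ˢ t) = volume t := by
      intro t ht
      refine (ENNReal.toReal_eq_toReal_iff' (hne MeasurableSet.univ ht) (measure_ne_top _ _)).mp ?_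
      rw [htoReal MeasurableSet.univ ht]
      simp only [Set.univ_inter]
      calc (∑ i, ∑ j, T i j / ((volume (P i)).toReal * (volume (Q j)).toReal) *
              ((volume (P i)).toReal * (volume (t ∩ Q j)).toReal))
          = ∑ j, ∑ i, T i j / ((volume (Q j)).toReal * (volume (P i)).toReal) *
              ((volume (t ∩ Q j)).toReal * (volume (P i)).toReal) := by
            rw [Finset.sum_comm]
            exact Finset.sum_congr rfl fun j _ => Finset.sum_congr rfl fun i _ => by ring
        _ = ∑ j, (volume (t ∩ Q j)).toReal :=
            real_key (fun j i => T i j) (fun j => (volume (Q j)).toReal)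
              (fun i => (volume (P i)).toReal) (fun j => (volume (t ∩ Q j)).toReal)
              hTcol (fun j i h => hTμ0 i j h) (fun j h => hzeroQ j h)
        _ = (volume t).toReal := by
            rw [← ENNReal.toReal_sum (fun j _ => measure_ne_top _ _),
              meas_partition volume hQmeas hQdisj hQcover ht]
    have hfst : π.map Prod.fst = volume := by
      refine Measure.ext fun s hs => ?_
      rw [Measure.map_apply measurable_fst hs,
        show Prod.fst ⁻¹' s = s ×ˢ Set.univ from Set.prod_univ.symm, hfst_val hs]
    have hsnd : π.map Prod.snd = volume := by
      refine Measure.ext fun t ht => ?_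
      rw [Measure.map_apply measurable_snd ht,
        show Prod.snd ⁻¹' t = Set.univ ×ˢ t from Set.univ_prod.symm, hsnd_val ht]
    have hprob : IsProbabilityMeasure π := by
      constructor
      rw [show (Set.univ : Set (I × I)) = Set.univ ×ˢ Set.univ from Set.univ_prod_univ.symm,
        hfst_val MeasurableSet.univ, measure_univ]
    refine ⟨π, hprob, hfst, hsnd, fun i₀ j₀ => ?_⟩
    refine (ENNReal.toReal_eq_toReal_iff' (hne (hPmeas i₀) (hQmeas j₀)) ENNReal.ofReal_ne_top).mp ?_
    rw [ENNReal.toReal_ofReal (hT0 i₀ j₀), htoReal (hPmeas i₀) (hQmeas j₀)]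
    rw [Finset.sum_eq_single i₀]
    · rw [Finset.sum_eq_single j₀]
      · rw [Set.inter_self, Set.inter_self]
        by_cases h : (volume (P i₀)).toReal * (volume (Q j₀)).toReal = 0
        · rcases mul_eq_zero.mp h with h' | h'
          · simp [hTμ0 i₀ j₀ h', h']
          · simp [hTν0 i₀ j₀ h', h']
        · exact div_mul_cancel₀ _ h
      · intro j _ hj
        have : Q j₀ ∩ Q j = ∅ :=
          Set.disjoint_iff_inter_eq_empty.mp (hQdisj (Ne.symm hj))
        simp [this]
      · intro h; exact absurd (Finset.mem_univ _) h
    · intro i _ hi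
      refine Finset.sum_eq_zero fun j _ => ?_
      have : P i₀ ∩ P i = ∅ :=
        Set.disjoint_iff_inter_eq_empty.mp (hPdisj (Ne.symm hi))
      simp [this]
    · intro h; exact absurd (Finset.mem_univ _) h
  -- set equality
  have hSet : { r : ℝ | ∃ π : Measure (I × I), IsProbabilityMeasure π ∧
      π.map Prod.fst = volume ∧ π.map Prod.snd = volume ∧
      r = ∫ q : (I × I) × (I × I),
        |stepFun P w₁ q.1.1 q.2.1 - stepFun Q w₂ q.1.2 q.2.2| ∂(π.prod π) } = F '' Cpl := by
    ext r
    constructor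
    · rintro ⟨π, hprob, h1, h2, rfl⟩
      haveI := hprob
      refine ⟨fun i j => (π (P i ×ˢ Q j)).toReal, ⟨fun i j => ENNReal.toReal_nonneg,
        fun i => coupling_row P Q hPmeas hQmeas hQdisj hQcover π h1 i,
        fun j => coupling_col P Q hPmeas hPdisj hPcover hQmeas π h2 j⟩, ?_⟩
      exact (integral_step_coupling P Q hPmeas hPdisj hPcover hQmeas hQdisj hQcover
        w₁ w₂ π).symm
    · rintro ⟨T, hT, rfl⟩
      obtain ⟨π, hprob, h1, h2, hPQ⟩ := hBuild T hT
      haveI := hprob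
      refine ⟨π, hprob, h1, h2, ?_⟩
      rw [integral_step_coupling P Q hPmeas hPdisj hPcover hQmeas hQdisj hQcover w₁ w₂ π]
      simp only [hPQ]
      obtain ⟨hT0, -, -⟩ := hT
      simp only [ENNReal.toReal_ofReal (hT0 _ _)]
      rfl
  -- compactness
  have hFcont : Continuous F := by
    refine continuous_finset_sum _ fun i _ => continuous_finset_sum _ fun j _ =>
      continuous_finset_sum _ fun i' _ => continuous_finset_sum _ fun j' _ =>
      continuous_const.mul (Continuous.mul ?_ ?_)
    · exact (continuous_apply i').comp (continuous_apply i)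
    · exact (continuous_apply j').comp (continuous_apply j)
  have hclosed : IsClosed Cpl := by
    have e1 : ∀ i : Fin nI, Continuous fun T : Fin nI → Fin nJ → ℝ => ∑ j, T i j :=
      fun i => continuous_finset_sum _ fun j _ => (continuous_apply j).comp (continuous_apply i)
    have e2 : ∀ j : Fin nJ, Continuous fun T : Fin nI → Fin nJ → ℝ => ∑ i, T i j :=
      fun j => continuous_finset_sum _ fun i _ => (continuous_apply j).comp (continuous_apply i)
    have hrepr : Cpl = (⋂ i, ⋂ j, {T : Fin nI → Fin nJ → ℝ | 0 ≤ T i j}) ∩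
        ((⋂ i, {T : Fin nI → Fin nJ → ℝ | ∑ j, T i j = (volume (P i)).toReal}) ∩
         (⋂ j, {T : Fin nI → Fin nJ → ℝ | ∑ i, T i j = (volume (Q j)).toReal})) := by
      ext T
      simp [hCplDef, Set.mem_iInter, Set.mem_setOf_eq]
    rw [hrepr]
    exact (isClosed_iInter fun i => isClosed_iInter fun j =>
        isClosed_le continuous_const ((continuous_apply j).comp (continuous_apply i))).inter
      ((isClosed_iInter fun i => isClosed_eq (e1 i) continuous_const).inter
       (isClosed_iInter fun j => isClosed_eq (e2 j) continuous_const))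
  have hsub : Cpl ⊆ Set.Icc (fun _ _ => (0 : ℝ)) (fun _ _ => (1 : ℝ)) := by
    rintro T ⟨hT0, hTrow, -⟩
    refine ⟨fun i j => hT0 i j, fun i j => ?_⟩
    calc T i j ≤ ∑ j', T i j' :=
          Finset.single_le_sum (fun k _ => hT0 i k) (Finset.mem_univ j)
      _ = (volume (P i)).toReal := hTrow i
      _ ≤ 1 := by
          calc (volume (P i)).toReal ≤ (1 : ENNReal).toReal :=
                ENNReal.toReal_mono ENNReal.one_ne_top prob_le_one
            _ = 1 := by simp
  have hcpt : IsCompact Cpl := IsCompact.of_isClosed_subset isCompact_Icc hclosed hsub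
  have hsum1P : ∑ i, (volume (P i)).toReal = 1 := by
    rw [← ENNReal.toReal_sum (fun i _ => measure_ne_top _ _)]
    have h := meas_partition volume hPmeas hPdisj hPcover MeasurableSet.univ
    simp only [Set.univ_inter] at h
    rw [h, measure_univ, ENNReal.toReal_one]
  have hsum1Q : ∑ j, (volume (Q j)).toReal = 1 := by
    rw [← ENNReal.toReal_sum (fun j _ => measure_ne_top _ _)]
    have h := meas_partition volume hQmeas hQdisj hQcover MeasurableSet.univ
    simp only [Set.univ_inter] at h
    rw [h, measure_univ, ENNReal.toReal_one]
  have hneCpl : Cpl.Nonempty := by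
    refine ⟨fun i j => (volume (P i)).toReal * (volume (Q j)).toReal,
      fun i j => mul_nonneg ENNReal.toReal_nonneg ENNReal.toReal_nonneg, fun i => ?_, fun j => ?_⟩
    · rw [← Finset.mul_sum, hsum1Q, mul_one]
    · rw [← Finset.sum_mul, hsum1P, one_mul]
  obtain ⟨T, hTmem, hTmin⟩ := hcpt.exists_isMinOn hneCpl hFcont.continuousOn
  refine ⟨T, hTmem, ?_, fun T' hT' => hTmin hT'⟩
  rw [hSet]
  refine le_antisymm ?_ ?_
  · refine le_csInf ⟨F T, ⟨T, hTmem, rfl⟩⟩ ?_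
    rintro r ⟨T', hT', rfl⟩
    exact hTmin hT'
  · exact csInf_le (hcpt.image hFcont).bddBelow ⟨T, hTmem, rfl⟩
end
end

section
/- Let W₁ ∈ ℝ^{I×I} and W₂ ∈ ℝ^{J×J} be symmetric matrices, let μ ∈ ℝ^I and ν ∈ ℝ^J be nonnegative vectors each summing to 1, and let T ∈ Π(μ, ν). Then Σ_{i,j,i',j'} (W₁[i,j] − W₂[i',j'])² T_{ii'} T_{jj'} = ⟨D − 2 W₁ T W₂ᵀ, T⟩, where D = (W₁ ⊙ W₁) μ 1_Jᵀ + 1_I νᵀ (W₂ ⊙ W₂), ⊙ denotes the entrywise (Hadamard) product, and ⟨·,·⟩ denotes the Frobenius inner product of matrices. -/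
open Matrix

noncomputable section

/-- A coupling matrix between probability vectors `μ` and `ν`: a nonnegative
matrix with row sums `μ` and column sums `ν`. -/
def IsCouplingMat {a b : ℕ} (μ : Fin a → ℝ) (ν : Fin b → ℝ)
    (T : Matrix (Fin a) (Fin b) ℝ) : Prop :=
  (∀ i j, 0 ≤ T i j) ∧ (∀ i, ∑ j, T i j = μ i) ∧ (∀ j, ∑ i, T i j = ν j)

/-- closed form of the squared 2-order Gromov-Wasserstein
objective: `Σ (W₁[i,j] - W₂[i',j'])² T_{ii'} T_{jj'} = ⟨D - 2 W₁ T W₂ᵀ, T⟩`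
with `D = (W₁ ⊙ W₁) μ 1ᵀ + 1 νᵀ (W₂ ⊙ W₂)`. -/
theorem gw2_objective_eq (nI nJ : ℕ)
    (W₁ : Matrix (Fin nI) (Fin nI) ℝ) (W₂ : Matrix (Fin nJ) (Fin nJ) ℝ)
    (h₁ : W₁ᵀ = W₁) (h₂ : W₂ᵀ = W₂)
    (μ : Fin nI → ℝ) (ν : Fin nJ → ℝ)
    (hμ0 : ∀ i, 0 ≤ μ i) (hμ1 : ∑ i, μ i = 1)
    (hν0 : ∀ j, 0 ≤ ν j) (hν1 : ∑ j, ν j = 1)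
    (T : Matrix (Fin nI) (Fin nJ) ℝ) (hT : IsCouplingMat μ ν T) :
    (∑ i, ∑ j, ∑ i', ∑ j', (W₁ i j - W₂ i' j') ^ 2 * (T i i' * T j j')) =
      ∑ i, ∑ j,
        ((((W₁ ⊙ W₁) *ᵥ μ) i + (ν ᵥ* (W₂ ⊙ W₂)) j - 2 * (W₁ * T * W₂ᵀ) i j)
          * T i j) := by
  obtain ⟨hpos, hrow, hcol⟩ := hT
  have hA : (∑ i, ∑ j, ∑ i', ∑ j', (W₁ i j * W₁ i j) * (T i i' * T j j'))
      = ∑ i, ∑ j, (((W₁ ⊙ W₁) *ᵥ μ) i) * T i j := by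
    have lhs : ∀ i j, (∑ i', ∑ j', (W₁ i j * W₁ i j) * (T i i' * T j j'))
        = (W₁ i j * W₁ i j) * (μ i * μ j) := by
      intro i j
      rw [← hrow i, ← hrow j, Finset.sum_mul_sum]
      simp [Finset.mul_sum]
    have rhs : ∀ i, (∑ j, (((W₁ ⊙ W₁) *ᵥ μ) i) * T i j)
        = ∑ j, (W₁ i j * W₁ i j) * (μ i * μ j) := by
      intro i
      rw [← Finset.mul_sum, hrow i, mulVec, dotProduct]
      simp only [hadamard_apply, Finset.sum_mul]
      exact Finset.sum_congr rfl fun j _ => by ring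
    simp only [lhs, rhs]
  have hB : (∑ i, ∑ j, ∑ i', ∑ j', (W₂ i' j' * W₂ i' j') * (T i i' * T j j'))
      = ∑ i, ∑ j, ((ν ᵥ* (W₂ ⊙ W₂)) j) * T i j := by
    have lhs : (∑ i, ∑ j, ∑ i', ∑ j', (W₂ i' j' * W₂ i' j') * (T i i' * T j j'))
        = ∑ i', ∑ j', (W₂ i' j' * W₂ i' j') * (ν i' * ν j') := by
      calc (∑ i, ∑ j, ∑ i', ∑ j', (W₂ i' j' * W₂ i' j') * (T i i' * T j j'))
          = ∑ i, ∑ i', ∑ j, ∑ j', (W₂ i' j' * W₂ i' j') * (T i i' * T j j') :=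
            Finset.sum_congr rfl fun i _ => Finset.sum_comm
        _ = ∑ i', ∑ i, ∑ j, ∑ j', (W₂ i' j' * W₂ i' j') * (T i i' * T j j') :=
            Finset.sum_comm
        _ = ∑ i', ∑ i, ∑ j', ∑ j, (W₂ i' j' * W₂ i' j') * (T i i' * T j j') :=
            Finset.sum_congr rfl fun i' _ => Finset.sum_congr rfl fun i _ =>
              Finset.sum_comm
        _ = ∑ i', ∑ j', ∑ i, ∑ j, (W₂ i' j' * W₂ i' j') * (T i i' * T j j') :=
            Finset.sum_congr rfl fun i' _ => Finset.sum_comm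
        _ = ∑ i', ∑ j', (W₂ i' j' * W₂ i' j') * (ν i' * ν j') := by
            refine Finset.sum_congr rfl fun i' _ => Finset.sum_congr rfl fun j' _ => ?_
            have h : (∑ i, ∑ j, (W₂ i' j' * W₂ i' j') * (T i i' * T j j'))
                = (W₂ i' j' * W₂ i' j') * ((∑ i, T i i') * (∑ j, T j j')) := by
              rw [Finset.sum_mul_sum]; simp [Finset.mul_sum]
            rw [h, hcol i', hcol j']
    have rhs : ∀ j, (∑ i, ((ν ᵥ* (W₂ ⊙ W₂)) j) * T i j)
        = ∑ i, (W₂ i j * W₂ i j) * (ν i * ν j) := by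
      intro j
      rw [← Finset.mul_sum, hcol j, vecMul, dotProduct]
      simp only [hadamard_apply, Finset.sum_mul]
      exact Finset.sum_congr rfl fun i _ => by ring
    have rhs' : (∑ i, ∑ j, ((ν ᵥ* (W₂ ⊙ W₂)) j) * T i j)
        = ∑ j, ∑ i, (W₂ i j * W₂ i j) * (ν i * ν j) := by
      rw [Finset.sum_comm]
      exact Finset.sum_congr rfl fun j _ => rhs j
    rw [lhs, rhs']
    exact Finset.sum_comm
  have hC : (∑ i, ∑ j, ∑ i', ∑ j', (2 * (W₁ i j * W₂ i' j')) * (T i i' * T j j'))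
      = ∑ i, ∑ j, (2 * (W₁ * T * W₂ᵀ) i j) * T i j := by
    refine Finset.sum_congr rfl fun i _ => ?_
    rw [Finset.sum_comm]
    refine Finset.sum_congr rfl fun i' _ => ?_
    simp only [Matrix.mul_apply, transpose_apply, Finset.sum_mul, Finset.mul_sum]
    rw [Finset.sum_comm]
    refine Finset.sum_congr rfl fun j _ => ?_
    exact Finset.sum_congr rfl fun j' _ => by ring
  have expand : ∀ i j i' j', (W₁ i j - W₂ i' j') ^ 2 * (T i i' * T j j')
      = (W₁ i j * W₁ i j) * (T i i' * T j j')
        + (W₂ i' j' * W₂ i' j') * (T i i' * T j j')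
        - (2 * (W₁ i j * W₂ i' j')) * (T i i' * T j j') := by
    intros; ring
  calc (∑ i, ∑ j, ∑ i', ∑ j', (W₁ i j - W₂ i' j') ^ 2 * (T i i' * T j j'))
      = (∑ i, ∑ j, ∑ i', ∑ j', (W₁ i j * W₁ i j) * (T i i' * T j j'))
        + (∑ i, ∑ j, ∑ i', ∑ j', (W₂ i' j' * W₂ i' j') * (T i i' * T j j'))
        - (∑ i, ∑ j, ∑ i', ∑ j', (2 * (W₁ i j * W₂ i' j')) * (T i i' * T j j')) := by
        simp only [expand, Finset.sum_sub_distrib, Finset.sum_add_distrib]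
    _ = ∑ i, ∑ j,
        ((((W₁ ⊙ W₁) *ᵥ μ) i + (ν ᵥ* (W₂ ⊙ W₂)) j - 2 * (W₁ * T * W₂ᵀ) i j)
          * T i j) := by
        rw [hA, hB, hC]
        simp only [← Finset.sum_add_distrib, ← Finset.sum_sub_distrib]
        exact Finset.sum_congr rfl fun i _ => Finset.sum_congr rfl fun j _ => by ring

end
end

section
/- Let A₁, …, A_M with A_m ∈ ℝ^{N_m × N_m} be symmetric matrices, let μ_m ∈ ℝ^{N_m} and μ ∈ ℝ^K be nonnegative vectors each summing to 1 with all entries of μ strictly positive, and let T_m ∈ Π(μ_m, μ) for each m. Then the function F(W) = (1/M) Σ_{m=1}^M Σ_{i,j,k,k'} (A_m[i,j] − W[k,k'])² (T_m)_{ik} (T_m)_{jk'} over W ∈ ℝ^{K×K} has the unique minimizer W* given entrywise by W*[k,k'] = (Σ_{m=1}^M (T_mᵀ A_m T_m)[k,k']) / (M · μ_k · μ_{k'}). -/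
open Matrix

noncomputable section

private lemma sum_rot {α β γ : Type*} [Fintype α] [Fintype β] [Fintype γ]
    (f : α → β → γ → ℝ) :
    ∑ x, ∑ y, ∑ z, f x y z = ∑ y, ∑ z, ∑ x, f x y z := by
  rw [Finset.sum_comm]
  exact Finset.sum_congr rfl fun y _ => by rw [Finset.sum_comm]

/-- the Gromov-Wasserstein barycenter objective has the unique
minimizer `W*[k,k'] = (Σ_m (T_mᵀ A_m T_m)[k,k']) / (M μ_k μ_{k'})`. -/
theorem gw_barycenter_closed_form (M K : ℕ) (hM : 0 < M) (N : Fin M → ℕ)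
    (A : (m : Fin M) → Matrix (Fin (N m)) (Fin (N m)) ℝ)
    (hA : ∀ m, (A m)ᵀ = A m)
    (μm : (m : Fin M) → Fin (N m) → ℝ) (μ : Fin K → ℝ)
    (hμm0 : ∀ m i, 0 ≤ μm m i) (hμm1 : ∀ m, ∑ i, μm m i = 1)
    (hμ0 : ∀ k, 0 < μ k) (hμ1 : ∑ k, μ k = 1)
    (T : (m : Fin M) → Matrix (Fin (N m)) (Fin K) ℝ)
    (hT : ∀ m, IsCouplingMat (μm m) μ (T m)) :
    let F : Matrix (Fin K) (Fin K) ℝ → ℝ := fun W =>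
      (1 / (M : ℝ)) * ∑ m, ∑ i, ∑ j, ∑ k, ∑ k',
        (A m i j - W k k') ^ 2 * ((T m) i k * (T m) j k')
    let Wstar : Matrix (Fin K) (Fin K) ℝ := Matrix.of fun k k' =>
      (∑ m, ((T m)ᵀ * A m * T m) k k') / ((M : ℝ) * μ k * μ k')
    (∀ W, F Wstar ≤ F W) ∧ ∀ W, F W = F Wstar → W = Wstar := by
  intro F Wstar
  set a : Fin K → Fin K → ℝ := fun k k' => (M : ℝ) * μ k * μ k' with ha
  set b : Fin K → Fin K → ℝ := fun k k' => ∑ m, ((T m)ᵀ * A m * T m) k k' with hb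
  have hMpos : (0 : ℝ) < (M : ℝ) := by exact_mod_cast hM
  have ha0 : ∀ k k', 0 < a k k' := fun k k' => by
    have := hμ0 k; have := hμ0 k'; positivity
  have hWs : ∀ k k', Wstar k k' = b k k' / a k k' := fun k k' => rfl
  have hba : ∀ k k', b k k' = a k k' * Wstar k k' := by
    intro k k'
    rw [hWs, mul_div_cancel₀ _ (ne_of_gt (ha0 k k'))]
  -- inner expansion per m, k, k'
  have inner : ∀ (m : Fin M) (c : ℝ) (k k' : Fin K),
      ∑ i, ∑ j, (A m i j - c) ^ 2 * (T m i k * T m j k')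
      = (∑ i, ∑ j, (A m i j) ^ 2 * (T m i k * T m j k'))
        - 2 * c * (((T m)ᵀ * A m * T m) k k')
        + c ^ 2 * (μ k * μ k') := by
    intro m c k k'
    have hcol := (hT m).2.2
    have hATT : ((T m)ᵀ * A m * T m) k k'
        = ∑ i, ∑ j, A m i j * (T m i k * T m j k') := by
      simp only [Matrix.mul_apply, Matrix.transpose_apply, Finset.sum_mul]
      rw [Finset.sum_comm]
      exact Finset.sum_congr rfl fun i _ => Finset.sum_congr rfl fun j _ => by ring
    have hTT : ∑ i, ∑ j, T m i k * T m j k' = μ k * μ k' := by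
      rw [← hcol k, ← hcol k', Finset.sum_mul_sum]
    have hexp : ∀ i j, (A m i j - c) ^ 2 * (T m i k * T m j k')
        = (A m i j) ^ 2 * (T m i k * T m j k')
          - 2 * c * (A m i j * (T m i k * T m j k'))
          + c ^ 2 * (T m i k * T m j k') := fun i j => by ring
    simp_rw [hexp, Finset.sum_add_distrib, Finset.sum_sub_distrib, ← Finset.mul_sum]
    have h3 : ∑ i, T m i k * ∑ j, T m j k' = μ k * μ k' := by
      rw [← Finset.sum_mul, hcol k, hcol k']
    rw [h3, hATT]
  -- normal form for F
  set Q : Matrix (Fin K) (Fin K) ℝ → Fin K → Fin K → ℝ := fun W k k' =>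
    (∑ m, ∑ i, ∑ j, (A m i j) ^ 2 * (T m i k * T m j k'))
      - 2 * W k k' * b k k' + (W k k') ^ 2 * a k k' with hQ
  have hF : ∀ W, F W = (1 / (M : ℝ)) * ∑ k, ∑ k', Q W k k' := by
    intro W
    show (1 / (M : ℝ)) * _ = _
    congr 1
    calc ∑ m, ∑ i, ∑ j, ∑ k, ∑ k', (A m i j - W k k') ^ 2 * (T m i k * T m j k')
        = ∑ m, ∑ k, ∑ k', ∑ i, ∑ j, (A m i j - W k k') ^ 2 * (T m i k * T m j k') := by
          refine Finset.sum_congr rfl fun m _ => ?_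
          calc ∑ i, ∑ j, ∑ k, ∑ k', (A m i j - W k k') ^ 2 * (T m i k * T m j k')
              = ∑ i, ∑ k, ∑ k', ∑ j, (A m i j - W k k') ^ 2 * (T m i k * T m j k') :=
                Finset.sum_congr rfl fun i _ => sum_rot _
            _ = ∑ k, ∑ k', ∑ i, ∑ j, (A m i j - W k k') ^ 2 * (T m i k * T m j k') :=
                sum_rot _
      _ = ∑ k, ∑ k', ∑ m, ∑ i, ∑ j, (A m i j - W k k') ^ 2 * (T m i k * T m j k') :=
          sum_rot _
      _ = ∑ k, ∑ k', Q W k k' := by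
          refine Finset.sum_congr rfl fun k _ => Finset.sum_congr rfl fun k' _ => ?_
          simp_rw [inner _ (W k k') k k', Finset.sum_add_distrib, Finset.sum_sub_distrib,
            ← Finset.mul_sum, Finset.sum_const, Finset.card_fin, nsmul_eq_mul]
          simp only [hQ, hb, ha]
          ring
  have key : ∀ W, F W = F Wstar + (1 / (M : ℝ)) * ∑ k, ∑ k',
      a k k' * (W k k' - Wstar k k') ^ 2 := by
    intro W
    rw [hF W, hF Wstar, ← mul_add]
    congr 1
    rw [← Finset.sum_add_distrib]
    refine Finset.sum_congr rfl fun k _ => ?_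
    rw [← Finset.sum_add_distrib]
    refine Finset.sum_congr rfl fun k' _ => ?_
    simp only [hQ]
    rw [hba k k']
    ring
  constructor
  · intro W
    rw [key W]
    have : 0 ≤ ∑ k, ∑ k', a k k' * (W k k' - Wstar k k') ^ 2 :=
      Finset.sum_nonneg fun k _ => Finset.sum_nonneg fun k' _ =>
        mul_nonneg (le_of_lt (ha0 k k')) (sq_nonneg _)
    have h2 : 0 ≤ (1 / (M : ℝ)) * ∑ k, ∑ k', a k k' * (W k k' - Wstar k k') ^ 2 :=
      mul_nonneg (by positivity) this
    linarith
  · intro W hW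
    rw [key W] at hW
    have hsum0 : ∑ k, ∑ k', a k k' * (W k k' - Wstar k k') ^ 2 = 0 := by
      have h1 : (1 / (M : ℝ)) * ∑ k, ∑ k', a k k' * (W k k' - Wstar k k') ^ 2 = 0 := by
        linarith [hW]
      have h2 : (1 / (M : ℝ)) ≠ 0 := by positivity
      exact (mul_eq_zero.mp h1).resolve_left h2
    have hterm : ∀ k ∈ Finset.univ, ∀ k' ∈ (Finset.univ : Finset (Fin K)),
        a k k' * (W k k' - Wstar k k') ^ 2 = 0 := by
      intro k _
      have hout := (Finset.sum_eq_zero_iff_of_nonneg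
        (fun k _ => Finset.sum_nonneg fun k' _ =>
          mul_nonneg (le_of_lt (ha0 k _)) (sq_nonneg _))).mp hsum0 k (Finset.mem_univ k)
      exact fun k' _ => (Finset.sum_eq_zero_iff_of_nonneg
        (fun k' _ => mul_nonneg (le_of_lt (ha0 k k')) (sq_nonneg _))).mp hout k'
        (Finset.mem_univ k')
    ext k k'
    have h := hterm k (Finset.mem_univ k) k' (Finset.mem_univ k')
    have h2 : (W k k' - Wstar k k') ^ 2 = 0 :=
      (mul_eq_zero.mp h).resolve_left (ne_of_gt (ha0 k k'))
    have := pow_eq_zero_iff (n := 2) (by norm_num) |>.mp h2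
    linarith [this]

end
end

section
/- Let A₁, …, A_M with A_m ∈ ℝ^{N_m × N_m} be symmetric matrices, let μ_m ∈ ℝ^{N_m} and μ ∈ ℝ^K be nonnegative vectors each summing to 1, let T_m ∈ Π(μ_m, μ) for each m, let L ∈ ℝ^{K×K}, and let α ≥ 0. Define the smoothed objective F(W) = (1/M) Σ_{m=1}^M Σ_{i,j,k,k'} (A_m[i,j] − W[k,k'])² (T_m)_{ik} (T_m)_{jk'} + α ‖L W Lᵀ‖_F² over W ∈ ℝ^{K×K}. Then the gradient of F vanishes at W if and only if W satisfies the linear equation α Lᵀ L W Lᵀ L + diag(μ) W diag(μ) = (1/M) Σ_{m=1}^M T_mᵀ A_m T_m. -/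
open Matrix

noncomputable section

attribute [local instance] Matrix.normedAddCommGroup Matrix.normedSpace

namespace SGWAux

variable {K : ℕ}

def entryL (k k' : Fin K) : Matrix (Fin K) (Fin K) ℝ →ₗ[ℝ] ℝ where
  toFun W := W k k'
  map_add' _ _ := rfl
  map_smul' _ _ := rfl

def regL (L : Matrix (Fin K) (Fin K) ℝ) (k k' : Fin K) :
    Matrix (Fin K) (Fin K) ℝ →ₗ[ℝ] ℝ where
  toFun W := (L * W * Lᵀ) k k'
  map_add' W₁ W₂ := by simp [Matrix.mul_add, Matrix.add_mul]
  map_smul' c W := by simp [Matrix.mul_smul, Matrix.smul_mul]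

noncomputable def entryCLM (k k' : Fin K) : Matrix (Fin K) (Fin K) ℝ →L[ℝ] ℝ :=
  (entryL k k').toContinuousLinearMap

noncomputable def regCLM (L : Matrix (Fin K) (Fin K) ℝ) (k k' : Fin K) :
    Matrix (Fin K) (Fin K) ℝ →L[ℝ] ℝ :=
  (regL L k k').toContinuousLinearMap

@[simp] lemma entryCLM_apply (k k' : Fin K) (H : Matrix (Fin K) (Fin K) ℝ) :
    entryCLM k k' H = H k k' := rfl

@[simp] lemma regCLM_apply (L : Matrix (Fin K) (Fin K) ℝ) (k k' : Fin K)
    (H : Matrix (Fin K) (Fin K) ℝ) : regCLM L k k' H = (L * H * Lᵀ) k k' := rfl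

lemma hterm (a c : ℝ) (k k' : Fin K) (W : Matrix (Fin K) (Fin K) ℝ) :
    HasFDerivAt (fun W' : Matrix (Fin K) (Fin K) ℝ => (a - W' k k') ^ 2 * c)
      ((2 * (a - W k k') * c * (-1)) • entryCLM k k') W := by
  have h1 : HasFDerivAt (fun W' : Matrix (Fin K) (Fin K) ℝ => a - W' k k')
      (-(entryCLM k k')) W := by
    exact ((entryCLM k k').hasFDerivAt (x := W)).const_sub a
  have h2 := (h1.mul h1).mul_const c
  have e : c • ((a - W k k') • -entryCLM k k' + (a - W k k') • -entryCLM k k') =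
      (2 * (a - W k k') * c * (-1)) • entryCLM k k' := by
    ext H; simp; ring
  have h3 := h2.congr_fderiv e
  refine h3.congr_of_eventuallyEq (Filter.Eventually.of_forall fun W' => ?_)
  show (a - W' k k') ^ 2 * c = (a - W' k k') * (a - W' k k') * c
  ring

lemma hterm2 (L : Matrix (Fin K) (Fin K) ℝ) (k k' : Fin K) (W : Matrix (Fin K) (Fin K) ℝ) :
    HasFDerivAt (fun W' : Matrix (Fin K) (Fin K) ℝ => ((L * W' * Lᵀ) k k') ^ 2)
      ((2 * (L * W * Lᵀ) k k') • regCLM L k k') W := by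
  have h0 := (regCLM L k k').hasFDerivAt (x := W)
  have h := h0.mul h0
  have e : (regCLM L k k') W • regCLM L k k' + (regCLM L k k') W • regCLM L k k' =
      (2 * (L * W * Lᵀ) k k') • regCLM L k k' := by
    ext H; simp; ring
  have h3 := h.congr_fderiv e
  refine h3.congr_of_eventuallyEq (Filter.Eventually.of_forall fun W' => ?_)
  show _ = (L * W' * Lᵀ) k k' * (L * W' * Lᵀ) k k'; ring

lemma sum_swap4 {ι₁ ι₂ ι₃ ι₄ : Type*} [Fintype ι₁] [Fintype ι₂] [Fintype ι₃] [Fintype ι₄]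
    (f : ι₁ → ι₂ → ι₃ → ι₄ → ℝ) :
    ∑ i, ∑ j, ∑ k, ∑ k', f i j k k' = ∑ k, ∑ k', ∑ i, ∑ j, f i j k k' := by
  calc ∑ i, ∑ j, ∑ k, ∑ k', f i j k k'
      = ∑ i, ∑ k, ∑ j, ∑ k', f i j k k' :=
        Finset.sum_congr rfl fun i _ => Finset.sum_comm
    _ = ∑ k, ∑ i, ∑ j, ∑ k', f i j k k' := Finset.sum_comm
    _ = ∑ k, ∑ i, ∑ k', ∑ j, f i j k k' :=
        Finset.sum_congr rfl fun k _ => Finset.sum_congr rfl fun i _ => Finset.sum_comm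
    _ = ∑ k, ∑ k', ∑ i, ∑ j, f i j k k' :=
        Finset.sum_congr rfl fun k _ => Finset.sum_comm

lemma sum_swap3 {ι₁ ι₂ ι₃ : Type*} [Fintype ι₁] [Fintype ι₂] [Fintype ι₃]
    (f : ι₁ → ι₂ → ι₃ → ℝ) :
    ∑ m, ∑ k, ∑ k', f m k k' = ∑ k, ∑ k', ∑ m, f m k k' := by
  calc ∑ m, ∑ k, ∑ k', f m k k' = ∑ k, ∑ m, ∑ k', f m k k' := Finset.sum_comm
    _ = ∑ k, ∑ k', ∑ m, f m k k' := Finset.sum_congr rfl fun k _ => Finset.sum_comm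

lemma sum_entry_mul_trace (P Q : Matrix (Fin K) (Fin K) ℝ) :
    ∑ k, ∑ k', P k k' * Q k k' = (P * Qᵀ).trace := by
  simp [Matrix.trace, Matrix.mul_apply, Matrix.diag]

lemma reg_adjoint (L W H : Matrix (Fin K) (Fin K) ℝ) :
    ∑ k, ∑ k', (L * W * Lᵀ) k k' * (L * H * Lᵀ) k k' =
      ∑ k, ∑ k', (Lᵀ * L * W * (Lᵀ * L)) k k' * H k k' := by
  rw [sum_entry_mul_trace, sum_entry_mul_trace]
  rw [Matrix.transpose_mul, Matrix.transpose_mul, Matrix.transpose_transpose]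
  rw [show L * W * Lᵀ * (L * (Hᵀ * Lᵀ)) = (L * (W * (Lᵀ * (L * Hᵀ)))) * Lᵀ by
    simp [Matrix.mul_assoc]]
  rw [Matrix.trace_mul_comm, show Lᵀ * (L * (W * (Lᵀ * (L * Hᵀ)))) =
    (Lᵀ * L * W * (Lᵀ * L)) * Hᵀ by simp [Matrix.mul_assoc]]

lemma reg_adjoint2 (L W H : Matrix (Fin K) (Fin K) ℝ) :
    ∑ k, ∑ k', (2 * (L * W * Lᵀ) k k') * (L * H * Lᵀ) k k' =
      ∑ k, ∑ k', (2 * (Lᵀ * L * W * (Lᵀ * L)) k k') * H k k' := by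
  have e1 : ∀ (P Q : Matrix (Fin K) (Fin K) ℝ),
      ∑ k, ∑ k', (2 * P k k') * Q k k' = 2 * ∑ k, ∑ k', P k k' * Q k k' := by
    intro P Q
    rw [Finset.mul_sum]
    refine Finset.sum_congr rfl fun k _ => ?_
    rw [Finset.mul_sum]
    exact Finset.sum_congr rfl fun k' _ => by ring
  rw [e1, e1, reg_adjoint]

end SGWAux

/-- first-order optimality condition for the smoothed
Gromov-Wasserstein barycenter objective. -/
theorem smoothed_gw_barycenter_foc (M K : ℕ) (hM : 0 < M) (N : Fin M → ℕ)
    (A : (m : Fin M) → Matrix (Fin (N m)) (Fin (N m)) ℝ)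
    (hA : ∀ m, (A m)ᵀ = A m)
    (μm : (m : Fin M) → Fin (N m) → ℝ) (μ : Fin K → ℝ)
    (hμm0 : ∀ m i, 0 ≤ μm m i) (hμm1 : ∀ m, ∑ i, μm m i = 1)
    (hμ0 : ∀ k, 0 ≤ μ k) (hμ1 : ∑ k, μ k = 1)
    (T : (m : Fin M) → Matrix (Fin (N m)) (Fin K) ℝ)
    (hT : ∀ m, IsCouplingMat (μm m) μ (T m))
    (L : Matrix (Fin K) (Fin K) ℝ) (α : ℝ) (hα : 0 ≤ α)
    (W : Matrix (Fin K) (Fin K) ℝ) :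
    let F : Matrix (Fin K) (Fin K) ℝ → ℝ := fun W' =>
      (1 / (M : ℝ)) * ∑ m, ∑ i, ∑ j, ∑ k, ∑ k',
        (A m i j - W' k k') ^ 2 * ((T m) i k * (T m) j k')
      + α * ∑ k, ∑ k', ((L * W' * Lᵀ) k k') ^ 2
    (fderiv ℝ F W = 0 ↔
      α • (Lᵀ * L * W * (Lᵀ * L)) +
          Matrix.diagonal μ * W * Matrix.diagonal μ =
        (1 / (M : ℝ)) • ∑ m, (T m)ᵀ * A m * T m) := by
  intro F
  have hM' : (M : ℝ) ≠ 0 := Nat.cast_ne_zero.mpr hM.ne'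
  set X : Matrix (Fin K) (Fin K) ℝ :=
    α • (Lᵀ * L * W * (Lᵀ * L)) + Matrix.diagonal μ * W * Matrix.diagonal μ with hX
  set Y : Matrix (Fin K) (Fin K) ℝ := (1 / (M : ℝ)) • ∑ m, (T m)ᵀ * A m * T m with hY
  set G : Matrix (Fin K) (Fin K) ℝ := X - Y with hG
  set D : Matrix (Fin K) (Fin K) ℝ →L[ℝ] ℝ :=
    ∑ k, ∑ k', (2 * G k k') • SGWAux.entryCLM k k' with hD
  have hsum1 : HasFDerivAt
      (fun W' : Matrix (Fin K) (Fin K) ℝ => ∑ m, ∑ i, ∑ j, ∑ k, ∑ k',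
        (A m i j - W' k k') ^ 2 * ((T m) i k * (T m) j k'))
      (∑ m, ∑ i, ∑ j, ∑ k, ∑ k',
        (2 * (A m i j - W k k') * ((T m) i k * (T m) j k') * (-1)) • SGWAux.entryCLM k k') W :=
    HasFDerivAt.fun_sum fun m _ => HasFDerivAt.fun_sum fun i _ => HasFDerivAt.fun_sum fun j _ =>
      HasFDerivAt.fun_sum fun k _ => HasFDerivAt.fun_sum fun k' _ => SGWAux.hterm _ _ k k' W
  have hsum2 : HasFDerivAt
      (fun W' : Matrix (Fin K) (Fin K) ℝ => ∑ k, ∑ k', ((L * W' * Lᵀ) k k') ^ 2)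
      (∑ k, ∑ k', (2 * (L * W * Lᵀ) k k') • SGWAux.regCLM L k k') W :=
    HasFDerivAt.fun_sum fun k _ => HasFDerivAt.fun_sum fun k' _ => SGWAux.hterm2 L k k' W
  have hF : HasFDerivAt F
      ((1 / (M : ℝ)) • (∑ m, ∑ i, ∑ j, ∑ k, ∑ k',
        (2 * (A m i j - W k k') * ((T m) i k * (T m) j k') * (-1)) • SGWAux.entryCLM k k')
        + α • (∑ k, ∑ k', (2 * (L * W * Lᵀ) k k') • SGWAux.regCLM L k k')) W :=
    (hsum1.const_mul _).add (hsum2.const_mul _)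
  have hDtot : ((1 / (M : ℝ)) • (∑ m, ∑ i, ∑ j, ∑ k, ∑ k',
        (2 * (A m i j - W k k') * ((T m) i k * (T m) j k') * (-1)) • SGWAux.entryCLM k k')
        + α • (∑ k, ∑ k', (2 * (L * W * Lᵀ) k k') • SGWAux.regCLM L k k')) = D := by
    ext H
    simp only [ContinuousLinearMap.add_apply, ContinuousLinearMap.coe_smul', Pi.smul_apply,
      ContinuousLinearMap.coe_sum', Finset.sum_apply, ContinuousLinearMap.smul_apply,
      SGWAux.entryCLM_apply, SGWAux.regCLM_apply, smul_eq_mul]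
    have hcol : ∀ m (k : Fin K), ∑ i, T m i k = μ k := fun m => (hT m).2.2
    have key1 : ∀ m : Fin M,
        ∑ i, ∑ j, ∑ k, ∑ k', 2 * (A m i j - W k k') * (T m i k * T m j k') * -1 * H k k'
          = ∑ k, ∑ k', (2 * (μ k * (W k k' * μ k')) - 2 * ((T m)ᵀ * A m * T m) k k') * H k k' := by
      intro m
      rw [SGWAux.sum_swap4]
      refine Finset.sum_congr rfl fun k _ => Finset.sum_congr rfl fun k' _ => ?_
      have hB : ∑ i, ∑ j, A m i j * (T m i k * T m j k') = ((T m)ᵀ * A m * T m) k k' := by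
        have h1 : ((T m)ᵀ * A m * T m) k k' = ∑ j, ∑ i, T m i k * A m i j * T m j k' := by
          simp [Matrix.mul_apply, Finset.sum_mul, Matrix.transpose_apply]
        rw [h1, Finset.sum_comm]
        exact Finset.sum_congr rfl fun i _ => Finset.sum_congr rfl fun j _ => by ring
      have hC : ∑ i, ∑ j, T m i k * T m j k' = μ k * μ k' := by
        rw [← hcol m k, ← hcol m k']
        exact (Finset.sum_mul_sum _ _ _ _).symm
      calc ∑ i, ∑ j, 2 * (A m i j - W k k') * (T m i k * T m j k') * -1 * H k k'
          = ∑ i, ∑ j, ((-2 * H k k') * (A m i j * (T m i k * T m j k'))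
              + (2 * W k k' * H k k') * (T m i k * T m j k')) :=
            Finset.sum_congr rfl fun i _ => Finset.sum_congr rfl fun j _ => by ring
        _ = (-2 * H k k') * (∑ i, ∑ j, A m i j * (T m i k * T m j k'))
              + (2 * W k k' * H k k') * (∑ i, ∑ j, T m i k * T m j k') := by
            rw [Finset.mul_sum, Finset.mul_sum, ← Finset.sum_add_distrib]
            refine Finset.sum_congr rfl fun i _ => ?_
            rw [Finset.mul_sum, Finset.mul_sum, ← Finset.sum_add_distrib]
        _ = (2 * (μ k * (W k k' * μ k')) - 2 * ((T m)ᵀ * A m * T m) k k') * H k k' := by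
            rw [hB, hC]; ring
    have e2 : ∑ m, (∑ i, ∑ j, ∑ k, ∑ k',
          2 * (A m i j - W k k') * (T m i k * T m j k') * -1 * H k k')
        = ∑ k, ∑ k', ∑ m,
            (2 * (μ k * (W k k' * μ k')) - 2 * ((T m)ᵀ * A m * T m) k k') * H k k' := by
      rw [Finset.sum_congr rfl fun m _ => key1 m, SGWAux.sum_swap3]
    rw [e2, SGWAux.reg_adjoint2, hD]
    simp only [ContinuousLinearMap.coe_sum', Finset.sum_apply,
      ContinuousLinearMap.smul_apply, SGWAux.entryCLM_apply, smul_eq_mul]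
    rw [Finset.mul_sum, Finset.mul_sum, ← Finset.sum_add_distrib]
    refine Finset.sum_congr rfl fun k _ => ?_
    rw [Finset.mul_sum, Finset.mul_sum, ← Finset.sum_add_distrib]
    refine Finset.sum_congr rfl fun k' _ => ?_
    have hGkk : G k k' = α * (Lᵀ * L * W * (Lᵀ * L)) k k' + μ k * W k k' * μ k'
        - (1 / (M : ℝ)) * ∑ m, ((T m)ᵀ * A m * T m) k k' := by
      simp [hG, hX, hY, Matrix.sub_apply, Matrix.add_apply, Matrix.smul_apply, smul_eq_mul,
        Matrix.mul_diagonal, Matrix.diagonal_mul, Matrix.sum_apply]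
    have hsplit : ∑ m, (2 * (μ k * (W k k' * μ k')) - 2 * ((T m)ᵀ * A m * T m) k k') * H k k'
        = (M : ℝ) * (2 * (μ k * (W k k' * μ k')) * H k k')
            - 2 * ((∑ m, ((T m)ᵀ * A m * T m) k k') * H k k') := by
      calc ∑ m, (2 * (μ k * (W k k' * μ k')) - 2 * ((T m)ᵀ * A m * T m) k k') * H k k'
          = ∑ m, (2 * (μ k * (W k k' * μ k')) * H k k'
              - 2 * (((T m)ᵀ * A m * T m) k k' * H k k')) :=
            Finset.sum_congr rfl fun m _ => by ring
        _ = (∑ _m : Fin M, 2 * (μ k * (W k k' * μ k')) * H k k')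
              - ∑ m, 2 * (((T m)ᵀ * A m * T m) k k' * H k k') := Finset.sum_sub_distrib _ _
        _ = (M : ℝ) * (2 * (μ k * (W k k' * μ k')) * H k k')
              - 2 * ((∑ m, ((T m)ᵀ * A m * T m) k k') * H k k') := by
            rw [Finset.sum_const, Finset.card_univ, Fintype.card_fin, nsmul_eq_mul,
              ← Finset.mul_sum, ← Finset.sum_mul]
    rw [hsplit, hGkk]
    field_simp
    ring
  rw [hF.fderiv, hDtot]
  constructor
  · intro h0
    have hGz : ∀ k k', G k k' = 0 := by
      intro k k'
      have h1 := congrFun (congrArg (DFunLike.coe) h0) (Matrix.single k k' 1)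
      simp only [hD, ContinuousLinearMap.coe_sum', Finset.sum_apply,
        ContinuousLinearMap.smul_apply, SGWAux.entryCLM_apply, smul_eq_mul,
        ContinuousLinearMap.zero_apply] at h1
      have h2 : ∑ x : Fin K, ∑ y : Fin K,
          2 * G x y * Matrix.single k k' (1 : ℝ) x y = 2 * G k k' := by
        rw [Finset.sum_eq_single k]
        · rw [Finset.sum_eq_single k']
          · simp
          · intro b _ hb
            have hz : Matrix.single k k' (1 : ℝ) k b = 0 :=
              Matrix.single_apply_of_ne _ _ _ _ _ (fun hcon => hb hcon.2.symm)
            rw [hz, mul_zero]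
          · intro hk; exact absurd (Finset.mem_univ k') hk
        · intro b _ hb
          refine Finset.sum_eq_zero fun b' _ => ?_
          have hz : Matrix.single k k' (1 : ℝ) b b' = 0 :=
            Matrix.single_apply_of_ne _ _ _ _ _ (fun hcon => hb hcon.1.symm)
          rw [hz, mul_zero]
        · intro hk; exact absurd (Finset.mem_univ k) hk
      rw [h2] at h1
      linarith
    have hG0 : G = 0 := by
      ext k k'
      exact hGz k k'
    have h2 : X - Y = 0 := by rw [← hG]; exact hG0
    exact sub_eq_zero.mp h2
  · intro h
    have hGz : G = 0 := by rw [hG]; exact sub_eq_zero_of_eq h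
    rw [hD, hGz]
    ext H
    simp

end
end
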